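/- arXiv:2006.04861 — 4 statements merged into one kernel-verified Lean document; each statement's English description precedes it below -/
import Mathlib

section
/- Let (a_p)_{p∈ℕ} be a sequence of positive real numbers. (i) There exists h > 0 such that sup_{p∈ℕ} a_p/h^p < ∞ if and only if for every r ∈ 𝔕 one has sup_{p∈ℕ} a_p/∏_{j=0}^p r_j < ∞. (ii) For every h > 0 one has sup_{p∈ℕ} h^p a_p < ∞ if and only if there exists r ∈ 𝔕 such that sup_{p∈ℕ} a_p ∏_{j=0}^p r_j < ∞. -/
open Filter MeasureTheory
open scoped BigOperators

noncomputable section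

/-- The family 𝔖 of non-decreasing positive sequences with `r 0 = r 1 = 1` tending to `∞`. -/
def inFrakR (r : ℕ → ℝ) : Prop :=
  (∀ j, 0 < r j) ∧ Monotone r ∧ r 0 = 1 ∧ r 1 = 1 ∧ Tendsto r atTop atTop


lemma helperB (f : ℕ → ℝ) (N : ℕ) (C : ℝ) (h : ∀ p, N ≤ p → f p ≤ C) :
    ∃ C', ∀ p, f p ≤ C' := by
  refine ⟨max C (((Finset.range (N+1)).sup' (by simp) f)), fun p => ?_⟩
  rcases le_or_gt N p with hp | hp
  · exact le_max_of_le_left (h p hp)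
  · exact le_max_of_le_right (Finset.le_sup' f (Finset.mem_range.2 (by omega)))


lemma lemA (r : ℕ → ℝ) (hr : inFrakR r) (h : ℝ) (hh : 0 < h) :
    ∃ C, ∀ p, h ^ p / ∏ j ∈ Finset.range (p+1), r j ≤ C := by
  obtain ⟨N, hN⟩ := (hr.2.2.2.2.eventually_ge_atTop h).exists_forall_of_atTop
  have hP : 0 < ∏ j ∈ Finset.range N, r j := Finset.prod_pos fun j _ => hr.1 j
  apply helperB _ N (h ^ N / (h * ∏ j ∈ Finset.range N, r j))
  intro p hp
  have hsplit : (∏ j ∈ Finset.range N, r j) * ∏ j ∈ Finset.Ico N (p+1), r j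
      = ∏ j ∈ Finset.range (p+1), r j := by
    rw [Finset.range_eq_Ico, Finset.range_eq_Ico]
    exact Finset.prod_Ico_consecutive r (Nat.zero_le _) (by omega : N ≤ p + 1)
  have hlow : h ^ (p + 1 - N) ≤ ∏ j ∈ Finset.Ico N (p+1), r j := by
    calc h ^ (p + 1 - N) = ∏ _j ∈ Finset.Ico N (p+1), h := by
          rw [Finset.prod_const, Nat.card_Ico]
      _ ≤ _ := Finset.prod_le_prod (fun _ _ => hh.le)
          (fun j hj => hN j (Finset.mem_Ico.1 hj).1)
  have hlow2 : (∏ j ∈ Finset.range N, r j) * h ^ (p + 1 - N)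
      ≤ ∏ j ∈ Finset.range (p+1), r j := by
    rw [← hsplit]
    exact mul_le_mul_of_nonneg_left hlow hP.le
  have h1 : 0 < (∏ j ∈ Finset.range N, r j) * h ^ (p + 1 - N) :=
    mul_pos hP (pow_pos hh _)
  calc h ^ p / ∏ j ∈ Finset.range (p+1), r j
      ≤ h ^ p / ((∏ j ∈ Finset.range N, r j) * h ^ (p + 1 - N)) :=
        div_le_div_of_nonneg_left (pow_pos hh p).le h1 hlow2
    _ = h ^ N / (h * ∏ j ∈ Finset.range N, r j) := by
        rw [div_eq_div_iff h1.ne' (by positivity)]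
        have h2 : h ^ (p + 1 - N) * h ^ N = h ^ (p+1) := by
          rw [← pow_add]; congr 1; omega
        have h3 : h ^ N * ((∏ j ∈ Finset.range N, r j) * h ^ (p + 1 - N))
            = (∏ j ∈ Finset.range N, r j) * (h ^ (p+1-N) * h ^ N) := by ring
        rw [h3, h2]; ring


def Rfun (q : ℕ → ℕ) (j : ℕ) : ℕ :=
  1 + ((Finset.range (j+1)).filter (fun m => q m ≤ j)).card

lemma Rfun_pos (q : ℕ → ℕ) (j : ℕ) : 0 < Rfun q j := by unfold Rfun; omega

lemma Rfun_mono (q : ℕ → ℕ) : Monotone (Rfun q) := by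
  intro j j' hj
  unfold Rfun
  have : ((Finset.range (j+1)).filter (fun m => q m ≤ j)) ⊆
      ((Finset.range (j'+1)).filter (fun m => q m ≤ j')) := by
    intro m hm
    simp only [Finset.mem_filter, Finset.mem_range] at *
    omega
  have := Finset.card_le_card this
  omega

lemma Rfun_le (q : ℕ → ℕ) (hq : StrictMono q) {j k : ℕ} (h : j < q k) :
    Rfun q j ≤ k + 1 := by
  unfold Rfun
  have : ((Finset.range (j+1)).filter (fun m => q m ≤ j)) ⊆ Finset.range k := by
    intro m hm
    simp only [Finset.mem_filter, Finset.mem_range] at *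
    by_contra hc
    have := hq.le_iff_le.2 (by omega : k ≤ m)
    omega
  have := Finset.card_le_card this
  simp only [Finset.card_range] at this
  omega

lemma Rfun_ge (q : ℕ → ℕ) (hq : StrictMono q) {j k : ℕ} (h : q k ≤ j) :
    k + 2 ≤ Rfun q j := by
  unfold Rfun
  have : Finset.range (k+1) ⊆ ((Finset.range (j+1)).filter (fun m => q m ≤ j)) := by
    intro m hm
    simp only [Finset.mem_filter, Finset.mem_range] at *
    have h1 : q m ≤ q k := hq.le_iff_le.2 (by omega)
    have h2 : m ≤ q m := hq.le_apply
    omega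
  have := Finset.card_le_card this
  simp only [Finset.card_range] at this
  omega

lemma Rfun_zero_one (q : ℕ → ℕ) (hq : StrictMono q) (h0 : 2 ≤ q 0) {j : ℕ} (hj : j ≤ 1) :
    Rfun q j = 1 := by
  unfold Rfun
  have : ((Finset.range (j+1)).filter (fun m => q m ≤ j)) = ∅ := by
    apply Finset.filter_false_of_mem
    intro m hm
    have h1 : q 0 ≤ q m := hq.le_iff_le.2 (by omega)
    omega
  rw [this]; simp


lemma Rfun_inFrakR (q : ℕ → ℕ) (hq : StrictMono q) (h0 : 2 ≤ q 0) :
    inFrakR (fun j => (Rfun q j : ℝ)) := by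
  refine ⟨fun j => by simpa using (Nat.cast_pos (α := ℝ)).2 (Rfun_pos q j),
    fun i j hij => by simpa using (Nat.cast_le (α := ℝ)).2 (Rfun_mono q hij),
    by norm_num [Rfun_zero_one q hq h0],
    by norm_num [Rfun_zero_one q hq h0], ?_⟩
  have : Tendsto (Rfun q) atTop atTop := by
    apply tendsto_atTop_atTop.2
    intro b
    exact ⟨q b, fun j hj => by have := Rfun_ge q hq hj; omega⟩
  exact tendsto_natCast_atTop_atTop.comp this

lemma prod_le_pow (r : ℕ → ℝ) (hpos : ∀ j, 0 < r j) (hmono : Monotone r) (p : ℕ) :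
    ∏ j ∈ Finset.range (p+1), r j ≤ r p ^ (p+1) := by
  calc ∏ j ∈ Finset.range (p+1), r j ≤ ∏ _j ∈ Finset.range (p+1), r p :=
        Finset.prod_le_prod (fun j _ => (hpos j).le)
          (fun j hj => hmono (Finset.mem_range_succ_iff.1 hj))
    _ = r p ^ (p+1) := by rw [Finset.prod_const, Finset.card_range]


lemma partI_rev (a : ℕ → ℝ) (ha : ∀ p, 0 < a p)
    (H : ∀ r : ℕ → ℝ, inFrakR r → ∃ C : ℝ, ∀ p : ℕ,
      a p / (∏ j ∈ Finset.range (p+1), r j) ≤ C) :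
    ∃ h : ℝ, 0 < h ∧ ∃ C : ℝ, ∀ p : ℕ, a p / h ^ p ≤ C := by
  by_contra hc
  push_neg at hc
  have hc' : ∀ h : ℝ, 0 < h → ∀ C : ℝ, ∃ p, C < a p / h ^ p := by
    intro h hh C
    rcases (hc h hh C) with ⟨p, hp⟩
    exact ⟨p, hp⟩
  have key : ∀ k m : ℕ, ∃ p, m < p ∧ ((k:ℝ)+1)^(p+2) < a p := by
    intro k m
    have hk : (0:ℝ) < (k:ℝ)+1 := by positivity
    obtain ⟨p, hp⟩ := hc' ((k:ℝ)+1) hk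
      (max (((k:ℝ)+1)^2) ((Finset.range (m+1)).sup' (by simp)
        (fun n => a n / ((k:ℝ)+1)^n)))
    refine ⟨p, ?_, ?_⟩
    · by_contra hpm
      push_neg at hpm
      have hmem : p ∈ Finset.range (m+1) := Finset.mem_range.2 (by omega)
      have : a p / ((k:ℝ)+1)^p ≤ (Finset.range (m+1)).sup' (by simp)
          (fun n => a n / ((k:ℝ)+1)^n) :=
        Finset.le_sup' (fun n => a n / ((k:ℝ)+1)^n) hmem
      exact absurd hp (not_lt.2 (this.trans (le_max_right _ _)))
    · have h1 : (((k:ℝ)+1)^2) < a p / ((k:ℝ)+1)^p :=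
        lt_of_le_of_lt (le_max_left _ _) hp
      have h2 : (((k:ℝ)+1)^2) * ((k:ℝ)+1)^p < a p := by
        rw [← lt_div_iff₀ (pow_pos hk p)] at *
        exact h1
      calc ((k:ℝ)+1)^(p+2) = (((k:ℝ)+1)^2) * ((k:ℝ)+1)^p := by ring
        _ < a p := h2
  choose F hF1 hF2 using key
  set P : ℕ → ℕ := fun k => Nat.rec (F 0 0) (fun k pk => F (k+1) pk) k with hP
  have hP0 : P 0 = F 0 0 := rfl
  have hPs : ∀ k, P (k+1) = F (k+1) (P k) := fun k => rfl
  have hPmono : StrictMono P := by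
    apply strictMono_nat_of_lt_succ
    intro k
    rw [hPs k]
    exact hF1 (k+1) (P k)
  have hPa : ∀ k : ℕ, ((k:ℝ)+1)^(P k + 2) < a (P k) := by
    intro k
    cases k with
    | zero => simpa [hP0] using hF2 0 0
    | succ k => simpa [hPs k] using hF2 (k+1) (P k)
  set q : ℕ → ℕ := fun k => P k + 1 with hq'
  have hq : StrictMono q := fun i j hij => by
    simp only [hq']; have := hPmono hij; omega
  have hq0 : 2 ≤ q 0 := by
    simp only [hq', hP0]
    have := hF1 0 0
    omega
  obtain ⟨C, hC⟩ := H _ (Rfun_inFrakR q hq hq0)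
  obtain ⟨k, hk⟩ := exists_nat_ge C
  have hrle : (Rfun q (P k) : ℝ) ≤ (k:ℝ)+1 := by
    have : Rfun q (P k) ≤ k + 1 := Rfun_le q hq (by simp [hq'])
    exact_mod_cast this
  have hprodpos : (0:ℝ) < ∏ j ∈ Finset.range (P k + 1), (Rfun q j : ℝ) :=
    Finset.prod_pos fun j _ => by exact_mod_cast Rfun_pos q j
  have hprodle : ∏ j ∈ Finset.range (P k + 1), (Rfun q j : ℝ) ≤ ((k:ℝ)+1)^(P k + 1) := by
    calc ∏ j ∈ Finset.range (P k + 1), (Rfun q j : ℝ)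
        ≤ (Rfun q (P k) : ℝ) ^ (P k + 1) :=
          prod_le_pow _ (fun j => by exact_mod_cast Rfun_pos q j)
            (fun i j hij => by exact_mod_cast Rfun_mono q hij) _
      _ ≤ ((k:ℝ)+1)^(P k + 1) := pow_le_pow_left₀ (by positivity) hrle _
  have hbig : ((k:ℝ)+1) * ∏ j ∈ Finset.range (P k + 1), (Rfun q j : ℝ) < a (P k) := by
    calc ((k:ℝ)+1) * ∏ j ∈ Finset.range (P k + 1), (Rfun q j : ℝ)
        ≤ ((k:ℝ)+1) * ((k:ℝ)+1)^(P k + 1) :=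
          mul_le_mul_of_nonneg_left hprodle (by positivity)
      _ = ((k:ℝ)+1)^(P k + 2) := by ring
      _ < a (P k) := hPa k
  have hdiv : ((k:ℝ)+1) < a (P k) / ∏ j ∈ Finset.range (P k + 1), (Rfun q j : ℝ) :=
    (lt_div_iff₀ hprodpos).2 hbig
  have := hC (P k)
  linarith

lemma partII_fwd (a : ℕ → ℝ) (ha : ∀ p, 0 < a p)
    (H : ∀ h : ℝ, 0 < h → ∃ C : ℝ, ∀ p : ℕ, h ^ p * a p ≤ C) :
    ∃ r : ℕ → ℝ, inFrakR r ∧ ∃ C : ℝ, ∀ p : ℕ,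
      a p * (∏ j ∈ Finset.range (p+1), r j) ≤ C := by
  have key : ∀ v : ℕ, ∃ M : ℕ, ∀ p, M ≤ p → a p * ((v:ℝ)+2)^(p+1) ≤ 1 := by
    intro v
    have hv : (0:ℝ) < (v:ℝ)+2 := by positivity
    have hv1 : (1:ℝ) < (v:ℝ)+2 := by
      have : (0:ℝ) ≤ (v:ℝ) := Nat.cast_nonneg v
      linarith
    obtain ⟨C, hC⟩ := H (((v:ℝ)+2)^2) (by positivity)
    obtain ⟨M, hM⟩ := (((tendsto_pow_atTop_atTop_of_one_lt hv1).eventually_ge_atTop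
      (C * ((v:ℝ)+2)))).exists_forall_of_atTop
    refine ⟨M, fun p hp => ?_⟩
    have h1 := hC p
    have h2 := hM p hp
    have h3 : a p * (((v:ℝ)+2))^(p+1) * (((v:ℝ)+2))^p ≤ 1 * (((v:ℝ)+2))^p := by
      have e : a p * (((v:ℝ)+2))^(p+1) * (((v:ℝ)+2))^p
          = ((((v:ℝ)+2)^2)^p * a p) * (((v:ℝ)+2)) := by rw [sq, mul_pow]; ring
      rw [e, one_mul]
      calc (((v:ℝ)+2)^2)^p * a p * (((v:ℝ)+2)) ≤ C * (((v:ℝ)+2)) :=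
            mul_le_mul_of_nonneg_right h1 hv.le
        _ ≤ (((v:ℝ)+2))^p := h2
    exact le_of_mul_le_mul_right h3 (pow_pos hv p)
  choose Mf hMf using key
  set q : ℕ → ℕ := fun k => Nat.rec (max 2 (Mf 0)) (fun k qk => max (qk+1) (Mf (k+1))) k
    with hqdef
  have hq0' : q 0 = max 2 (Mf 0) := rfl
  have hqs : ∀ k, q (k+1) = max (q k + 1) (Mf (k+1)) := fun k => rfl
  have hq : StrictMono q := by
    apply strictMono_nat_of_lt_succ
    intro k
    rw [hqs k]
    omega
  have hq0 : 2 ≤ q 0 := by rw [hq0']; omega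
  have hqM : ∀ k, Mf k ≤ q k := by
    intro k
    cases k with
    | zero => rw [hq0']; omega
    | succ k => rw [hqs k]; omega
  refine ⟨_, Rfun_inFrakR q hq hq0, ?_⟩
  apply helperB _ (q 0) 1
  intro p hp
  have hv2 : 2 ≤ Rfun q p := Rfun_ge q hq hp
  set v := Rfun q p with hv
  set w := v - 2 with hw
  have hvw : v = w + 2 := by omega
  have hqwp : q w ≤ p := by
    by_contra hcon
    push_neg at hcon
    have := Rfun_le q hq hcon
    omega
  have hMp : Mf w ≤ p := le_trans (hqM w) hqwp
  have hbound := hMf w p hMp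
  have hcast : ((w:ℝ)+2) = (v:ℝ) := by
    rw [hvw]; push_cast; ring
  rw [hcast] at hbound
  have hprodle : ∏ j ∈ Finset.range (p + 1), (Rfun q j : ℝ) ≤ (v:ℝ)^(p+1) :=
    prod_le_pow _ (fun j => by exact_mod_cast Rfun_pos q j)
      (fun i j hij => by exact_mod_cast Rfun_mono q hij) _
  calc a p * ∏ j ∈ Finset.range (p + 1), (Rfun q j : ℝ)
      ≤ a p * (v:ℝ)^(p+1) := mul_le_mul_of_nonneg_left hprodle (ha p).le
    _ ≤ 1 := hbound

/-- Komatsu's lemma on the family 𝔖 (Lemma 2.1). -/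
theorem stmt0 (a : ℕ → ℝ) (ha : ∀ p, 0 < a p) :
    ((∃ h : ℝ, 0 < h ∧ ∃ C : ℝ, ∀ p : ℕ, a p / h ^ p ≤ C) ↔
      (∀ r : ℕ → ℝ, inFrakR r → ∃ C : ℝ, ∀ p : ℕ,
        a p / (∏ j ∈ Finset.range (p+1), r j) ≤ C)) ∧
    ((∀ h : ℝ, 0 < h → ∃ C : ℝ, ∀ p : ℕ, h ^ p * a p ≤ C) ↔
      (∃ r : ℕ → ℝ, inFrakR r ∧ ∃ C : ℝ, ∀ p : ℕ,
        a p * (∏ j ∈ Finset.range (p+1), r j) ≤ C)) := by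
  constructor
  · constructor
    · rintro ⟨h, hh, C, hC⟩ r hr
      obtain ⟨C', hC'⟩ := lemA r hr h hh
      have hCpos : 0 < C := lt_of_lt_of_le (div_pos (ha 0) (pow_pos hh 0)) (hC 0)
      refine ⟨C * C', fun p => ?_⟩
      have hprodpos : (0:ℝ) < ∏ j ∈ Finset.range (p+1), r j :=
        Finset.prod_pos fun j _ => hr.1 j
      have e : a p / ∏ j ∈ Finset.range (p+1), r j
          = (a p / h ^ p) * (h ^ p / ∏ j ∈ Finset.range (p+1), r j) := by
        field_simp
      rw [e]
      exact mul_le_mul (hC p) (hC' p) (by positivity) hCpos.le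
    · exact partI_rev a ha
  · constructor
    · exact partII_fwd a ha
    · rintro ⟨r, hr, C, hC⟩ h hh
      obtain ⟨C', hC'⟩ := lemA r hr h hh
      have hC'pos : 0 < C' := by
        have h0 : (0:ℝ) < h ^ 0 / ∏ j ∈ Finset.range 1, r j := by
          apply div_pos (pow_pos hh 0)
          exact Finset.prod_pos fun j _ => hr.1 j
        exact lt_of_lt_of_le h0 (hC' 0)
      refine ⟨C' * C, fun p => ?_⟩
      have hprodpos : (0:ℝ) < ∏ j ∈ Finset.range (p+1), r j :=
        Finset.prod_pos fun j _ => hr.1 j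
      have e : h ^ p * a p
          = (h ^ p / ∏ j ∈ Finset.range (p+1), r j)
            * (a p * ∏ j ∈ Finset.range (p+1), r j) := by
        field_simp
      rw [e]
      exact mul_le_mul (hC' p) (hC p) (mul_pos (ha p) hprodpos).le hC'pos.le
end
end

section
/- Let E be a locally convex Hausdorff topological vector space, let B ⊆ E be a non-empty bounded, absolutely convex, closed set, and let f ∈ C^∞(ℝ^d; E). Fix x_0 ∈ ℝ^d, a multi-index α ∈ ℕ^d, and R > 0 such that ∂^β f(y) ∈ R·B for all y with |y − x_0| ≤ 1 and all multi-indices β with |β| = |α| + 2. Then for every x with 0 < |x − x_0| ≤ 1 one has gauge_B( ∂^α f(x) − ∂^α f(x_0) − Σ_{j=1}^d (x_j − x_{0,j}) ∂^{α+e_j} f(x_0) ) ≤ d² R |x − x_0|², where gauge_B denotes the Minkowski functional of B and e_j is the j-th standard unit multi-index. (Consequently, a smooth E-valued function whose derivatives are locally uniformly absorbed by B is smooth as a map into the normed space spanned by B.) -/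
open Filter MeasureTheory
open scoped BigOperators Pointwise

noncomputable section

abbrev Rd (d : ℕ) := EuclideanSpace ℝ (Fin d)

/-- Partial derivative in the `j`-th coordinate direction. -/
def dop {d : ℕ} {E : Type*} [NormedAddCommGroup E] [NormedSpace ℝ E]
    (j : Fin d) (f : Rd d → E) : Rd d → E :=
  fun x => fderiv ℝ f x (EuclideanSpace.single j (1:ℝ))

/-- Iterated partial derivative `∂^α` for a multi-index `α : Fin d → ℕ`. -/
def pD {d : ℕ} {E : Type*} [NormedAddCommGroup E] [NormedSpace ℝ E]
    (α : Fin d → ℕ) (f : Rd d → E) : Rd d → E :=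
  (List.finRange d).foldr (fun j g => (dop j)^[α j] g) f

/-- Length `|α|` of a multi-index. -/
def msize {d : ℕ} (α : Fin d → ℕ) : ℕ := ∑ j, α j

/-- The `j`-th standard unit multi-index. -/
def unitIdx {d : ℕ} (j : Fin d) : Fin d → ℕ := fun i => if i = j then 1 else 0

section Aux

variable {d : ℕ} {E : Type*} [NormedAddCommGroup E] [NormedSpace ℝ E]

lemma dop_contDiff {g : Rd d → E} (hg : ContDiff ℝ (⊤:ℕ∞) g) (j : Fin d) :
    ContDiff ℝ (⊤:ℕ∞) (dop j g) :=
  (hg.fderiv_right (m := (⊤:ℕ∞)) (by simp)).clm_apply contDiff_const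

lemma dop_iter_contDiff {g : Rd d → E} (hg : ContDiff ℝ (⊤:ℕ∞) g) (j : Fin d) (n : ℕ) :
    ContDiff ℝ (⊤:ℕ∞) ((dop j)^[n] g) := by
  induction n with
  | zero => exact hg
  | succ n ih => rw [Function.iterate_succ_apply']; exact dop_contDiff ih j

lemma euclid_decomp (v : Rd d) : v = ∑ j, v j • EuclideanSpace.single j (1:ℝ) := by
  classical
  have := (EuclideanSpace.basisFun (Fin d) ℝ).sum_repr v
  simpa [EuclideanSpace.basisFun_apply, EuclideanSpace.basisFun_repr] using this.symm

lemma dop_dop {g : Rd d → E} (hg : ContDiff ℝ (⊤:ℕ∞) g) (i j : Fin d) (x : Rd d) :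
    dop i (dop j g) x = fderiv ℝ (fderiv ℝ g) x (EuclideanSpace.single i 1)
      (EuclideanSpace.single j 1) := by
  have hc : DifferentiableAt ℝ (fderiv ℝ g) x :=
    ((hg.fderiv_right (m := (⊤:ℕ∞)) (by simp)).differentiable (by simp)).differentiableAt
  show fderiv ℝ (fun y => (fderiv ℝ g y) (EuclideanSpace.single j 1)) x
      (EuclideanSpace.single i 1) = _
  rw [fderiv_clm_apply hc (differentiableAt_const _)]
  simp

lemma dop_comm {g : Rd d → E} (hg : ContDiff ℝ (⊤:ℕ∞) g) (i j : Fin d) :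
    dop i (dop j g) = dop j (dop i g) := by
  funext x
  rw [dop_dop hg i j x, dop_dop hg j i x]
  exact second_derivative_symmetric
    (fun y => (hg.differentiable (by simp)).differentiableAt.hasFDerivAt)
    (((hg.fderiv_right (m := (⊤:ℕ∞)) (by simp)).differentiable
      (by simp)).differentiableAt.hasFDerivAt) _ _

lemma dop_iterate_comm {g : Rd d → E} (hg : ContDiff ℝ (⊤:ℕ∞) g) (i j : Fin d) (n : ℕ) :
    dop j ((dop i)^[n] g) = (dop i)^[n] (dop j g) := by
  induction n with
  | zero => rfl
  | succ n ih =>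
      rw [Function.iterate_succ_apply', Function.iterate_succ_apply',
        dop_comm (dop_iter_contDiff hg i n) j i, ih]

lemma foldr_contDiff (α : Fin d → ℕ) (l : List (Fin d)) {g : Rd d → E}
    (hg : ContDiff ℝ (⊤:ℕ∞) g) :
    ContDiff ℝ (⊤:ℕ∞) (l.foldr (fun j h => (dop j)^[α j] h) g) := by
  induction l with
  | nil => exact hg
  | cons i t ih => exact dop_iter_contDiff ih i (α i)

lemma pD_contDiff (α : Fin d → ℕ) {g : Rd d → E} (hg : ContDiff ℝ (⊤:ℕ∞) g) :
    ContDiff ℝ (⊤:ℕ∞) (pD α g) := foldr_contDiff α _ hg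

lemma foldr_congr {α α' : Fin d → ℕ} (l : List (Fin d)) (h : ∀ i ∈ l, α i = α' i)
    (g : Rd d → E) :
    l.foldr (fun j h => (dop j)^[α j] h) g = l.foldr (fun j h => (dop j)^[α' j] h) g := by
  induction l with
  | nil => rfl
  | cons i t ih =>
      simp only [List.foldr_cons]
      rw [ih (fun i hi => h i (List.mem_cons_of_mem _ hi)), h i List.mem_cons_self]

lemma foldr_add_unit {α : Fin d → ℕ} (j : Fin d) (l : List (Fin d)) (hnd : l.Nodup)
    (hj : j ∈ l) {g : Rd d → E} (hg : ContDiff ℝ (⊤:ℕ∞) g) :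
    l.foldr (fun i h => (dop i)^[(α + unitIdx j) i] h) g =
      dop j (l.foldr (fun i h => (dop i)^[α i] h) g) := by
  induction l with
  | nil => simp at hj
  | cons i t ih =>
      rcases List.nodup_cons.1 hnd with ⟨hit, hndt⟩
      simp only [List.foldr_cons]
      rcases List.mem_cons.1 hj with rfl | hjt
      · have ht : t.foldr (fun i' h => (dop i')^[(α + unitIdx j) i'] h) g =
            t.foldr (fun i' h => (dop i')^[α i'] h) g :=
          foldr_congr t (fun i' hi' => by
            have hne : i' ≠ j := fun h => hit (h ▸ hi')
            simp [unitIdx, hne]) g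
        rw [ht]
        have h1 : (α + unitIdx j) j = α j + 1 := by simp [unitIdx]
        rw [h1, Function.iterate_succ_apply']
      · have hij : i ≠ j := fun h => hit (h ▸ hjt)
        have hiα : (α + unitIdx j) i = α i := by
          simp [unitIdx, Pi.add_apply, hij]
        rw [hiα, ih hndt hjt, dop_iterate_comm (foldr_contDiff α t hg) i j]

lemma pD_add_unit (α : Fin d → ℕ) (j : Fin d) {g : Rd d → E} (hg : ContDiff ℝ (⊤:ℕ∞) g) :
    pD (α + unitIdx j) g = dop j (pD α g) :=
  foldr_add_unit j _ (List.nodup_finRange d) (List.mem_finRange j) hg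

lemma fderiv_eq_sum_dop {h : Rd d → E} (hh : ContDiff ℝ (⊤:ℕ∞) h) (x v : Rd d) :
    fderiv ℝ h x v = ∑ j, v j • dop j h x := by
  conv_lhs => rw [euclid_decomp v]
  rw [map_sum]
  simp [dop]

lemma coord_abs_le_norm (v : Rd d) (i : Fin d) : |v i| ≤ ‖v‖ := by
  have h := abs_real_inner_le_norm (EuclideanSpace.single i (1:ℝ)) v
  rw [EuclideanSpace.inner_single_left] at h
  simpa [EuclideanSpace.norm_single] using h

lemma second_fderiv_bound {h : Rd d → E} (y : Rd d) {M : ℝ} (hM : 0 ≤ M)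
    (hb : ∀ i j : Fin d, ‖fderiv ℝ (fderiv ℝ h) y (EuclideanSpace.single i 1)
      (EuclideanSpace.single j 1)‖ ≤ M) :
    ‖fderiv ℝ (fderiv ℝ h) y‖ ≤ (d:ℝ)^2 * M := by
  set A := fderiv ℝ (fderiv ℝ h) y with hA
  refine ContinuousLinearMap.opNorm_le_bound _ (by positivity) fun u => ?_
  refine ContinuousLinearMap.opNorm_le_bound _ (by positivity) fun v => ?_
  have expand : A u v = ∑ i, ∑ j, (u i * v j) •
      A (EuclideanSpace.single i 1) (EuclideanSpace.single j 1) := by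
    conv_lhs => rw [euclid_decomp u]
    rw [map_sum, ContinuousLinearMap.sum_apply]
    refine Finset.sum_congr rfl fun i _ => ?_
    rw [_root_.map_smul, ContinuousLinearMap.smul_apply]
    conv_lhs => rw [euclid_decomp v]
    rw [map_sum, Finset.smul_sum]
    refine Finset.sum_congr rfl fun j _ => ?_
    rw [_root_.map_smul, smul_smul]
  rw [expand]
  calc ‖∑ i, ∑ j, (u i * v j) •
      A (EuclideanSpace.single i 1) (EuclideanSpace.single j 1)‖
      ≤ ∑ i, ∑ j : Fin d, ‖u‖ * ‖v‖ * M := by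
        refine (norm_sum_le _ _).trans (Finset.sum_le_sum fun i _ => ?_)
        refine (norm_sum_le _ _).trans (Finset.sum_le_sum fun j _ => ?_)
        rw [norm_smul, Real.norm_eq_abs, abs_mul]
        have h1 := coord_abs_le_norm u i
        have h2 := coord_abs_le_norm v j
        have h3 := hb i j
        have := mul_le_mul (mul_le_mul h1 h2 (abs_nonneg _) (norm_nonneg _)) h3
          (norm_nonneg _) (by positivity)
        linarith
    _ = (d:ℝ)^2 * M * ‖u‖ * ‖v‖ := by
        simp [Finset.sum_const, Finset.card_univ]
        ring

lemma taylor_bound {h : Rd d → E} (hh : ContDiff ℝ (⊤:ℕ∞) h) (x₀ x : Rd d) {M : ℝ} (hM : 0 ≤ M)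
    (hbd : ∀ y ∈ Metric.closedBall x₀ ‖x - x₀‖, ‖fderiv ℝ (fderiv ℝ h) y‖ ≤ M) :
    ‖h x - h x₀ - fderiv ℝ h x₀ (x - x₀)‖ ≤ M * ‖x - x₀‖^2 := by
  set s := Metric.closedBall x₀ ‖x - x₀‖ with hsdef
  have hs : Convex ℝ s := convex_closedBall _ _
  have hx₀s : x₀ ∈ s := Metric.mem_closedBall_self (norm_nonneg _)
  have hxs : x ∈ s := by simp [hsdef, Metric.mem_closedBall, dist_eq_norm]
  have hdiff1 : ∀ y, DifferentiableAt ℝ h y :=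
    fun y => (hh.differentiable (by simp)).differentiableAt
  have hdiff2 : Differentiable ℝ (fderiv ℝ h) :=
    (hh.fderiv_right (m := (⊤:ℕ∞)) (by simp)).differentiable (by simp)
  have step1 : ∀ y ∈ s, ‖fderiv ℝ h y - fderiv ℝ h x₀‖ ≤ M * ‖x - x₀‖ := by
    intro y hy
    have key := hs.norm_image_sub_le_of_norm_hasFDerivWithin_le
      (f := fderiv ℝ h) (f' := fun z => fderiv ℝ (fderiv ℝ h) z)
      (fun z _ => (hdiff2 z).hasFDerivAt.hasFDerivWithinAt) hbd hx₀s hy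
    refine key.trans (mul_le_mul_of_nonneg_left ?_ hM)
    simpa [hsdef, Metric.mem_closedBall, dist_eq_norm] using hy
  have step2 : ∀ y ∈ s, ‖(fderiv ℝ h y - fderiv ℝ h x₀ : Rd d →L[ℝ] E)‖ ≤ M * ‖x - x₀‖ :=
    step1
  have key2 := hs.norm_image_sub_le_of_norm_hasFDerivWithin_le
    (f := fun y => h y - fderiv ℝ h x₀ y)
    (f' := fun y => fderiv ℝ h y - fderiv ℝ h x₀)
    (fun z _ => (((hdiff1 z).hasFDerivAt).sub ((fderiv ℝ h x₀).hasFDerivAt)).hasFDerivWithinAt)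
    step2 hx₀s hxs
  calc ‖h x - h x₀ - fderiv ℝ h x₀ (x - x₀)‖
      = ‖(h x - fderiv ℝ h x₀ x) - (h x₀ - fderiv ℝ h x₀ x₀)‖ := by
        rw [map_sub]; congr 1; abel
    _ ≤ M * ‖x - x₀‖ * ‖x - x₀‖ := key2
    _ = M * ‖x - x₀‖^2 := by ring

lemma msize_add (α β : Fin d → ℕ) : msize (α + β) = msize α + msize β := by
  simp [msize, Finset.sum_add_distrib]

lemma msize_unitIdx (j : Fin d) : msize (unitIdx j) = 1 := by
  simp [msize, unitIdx]

lemma scalar_taylor {g : Rd d → E} (hg : ContDiff ℝ (⊤:ℕ∞) g) (x₀ x : Rd d)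
    (α : Fin d → ℕ) {M : ℝ} (hM : 0 ≤ M) (hx1 : ‖x - x₀‖ ≤ 1)
    (hbd : ∀ y : Rd d, ‖y - x₀‖ ≤ 1 → ∀ β, msize β = msize α + 2 → ‖pD β g y‖ ≤ M) :
    ‖pD α g x - pD α g x₀ - ∑ j, (x j - x₀ j) • pD (α + unitIdx j) g x₀‖
      ≤ (d:ℝ)^2 * M * ‖x - x₀‖^2 := by
  have hhs : ContDiff ℝ (⊤:ℕ∞) (pD α g) := pD_contDiff α hg
  have hsum : fderiv ℝ (pD α g) x₀ (x - x₀) =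
      ∑ j, (x j - x₀ j) • pD (α + unitIdx j) g x₀ := by
    rw [fderiv_eq_sum_dop hhs]
    refine Finset.sum_congr rfl fun j _ => ?_
    rw [pD_add_unit α j hg]
    rfl
  rw [← hsum]
  refine taylor_bound hhs x₀ x (by positivity) ?_
  intro y hy
  refine second_fderiv_bound y hM ?_
  intro i j
  rw [← dop_dop hhs i j y]
  have e2 : dop i (dop j (pD α g)) = pD (α + unitIdx j + unitIdx i) g := by
    rw [← pD_add_unit α j hg, ← pD_add_unit _ i hg]
  rw [e2]
  apply hbd
  · have hle : ‖y - x₀‖ ≤ ‖x - x₀‖ := by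
      simpa [Metric.mem_closedBall, dist_eq_norm] using hy
    exact hle.trans hx1
  · simp [msize_add, msize_unitIdx]

end Aux

/-- Taylor estimate in the gauge of `B` for weakly smooth functions with values in a
locally convex Hausdorff space (Lemma 4.3). Here `D β` plays the role of `∂^β f`; weak
`C^∞`-smoothness is expressed by composing with continuous linear functionals. -/

theorem stmt2 {d : ℕ} {E : Type*} [AddCommGroup E] [Module ℝ E] [TopologicalSpace E]
    [IsTopologicalAddGroup E] [ContinuousSMul ℝ E] [LocallyConvexSpace ℝ E] [T2Space E]
    (B : Set E) (hBne : B.Nonempty) (hBconv : Convex ℝ B) (hBbal : Balanced ℝ B)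
    (hBcl : IsClosed B) (hBbdd : Bornology.IsVonNBounded ℝ B)
    (f : Rd d → E) (D : (Fin d → ℕ) → Rd d → E)
    (hD0 : D 0 = f)
    (hweakSmooth : ∀ e' : E →L[ℝ] ℝ, ContDiff ℝ (⊤ : ℕ∞) (fun x => e' (f x)) ∧
      ∀ β : Fin d → ℕ, pD β (fun x => e' (f x)) = fun x => e' (D β x))
    (x₀ : Rd d) (α : Fin d → ℕ) (R : ℝ) (hR : 0 < R)
    (hbound : ∀ y : Rd d, ‖y - x₀‖ ≤ 1 → ∀ β : Fin d → ℕ,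
      msize β = msize α + 2 → D β y ∈ R • B) :
    ∀ x : Rd d, 0 < ‖x - x₀‖ → ‖x - x₀‖ ≤ 1 →
      gauge B (D α x - D α x₀ -
          ∑ j : Fin d, (x j - x₀ j) • D (α + unitIdx j) x₀)
        ≤ (d : ℝ)^2 * R * ‖x - x₀‖^2 := by
  intro x hx0 hx1
  set v := D α x - D α x₀ - ∑ j, (x j - x₀ j) • D (α + unitIdx j) x₀ with hv
  set c := (d:ℝ)^2 * R * ‖x - x₀‖^2 with hc
  have hd : 0 < d := by
    rcases Nat.eq_zero_or_pos d with h | h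
    · subst h
      exfalso
      have hxx : x = x₀ := by ext i; exact i.elim0
      rw [hxx] at hx0; simp at hx0
    · exact h
  have hc0 : (0:ℝ) < c := by
    have : (0:ℝ) < (d:ℝ) := by exact_mod_cast hd
    positivity
  have h0B : (0:E) ∈ B := by
    obtain ⟨b, hb⟩ := hBne
    have := hBbal 0 (by norm_num) (Set.smul_mem_smul_set (a := (0:ℝ)) hb)
    simpa using this
  have hmem : v ∈ c • B := by
    by_contra hvB
    have hclosed : IsClosed (c • B) := hBcl.smul_of_ne_zero hc0.ne'
    have hconv : Convex ℝ (c • B) := hBconv.smul c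
    obtain ⟨e', u, hsep, hu⟩ := geometric_hahn_banach_closed_point hconv hclosed hvB
    have hu0 : 0 < u := by
      have h0 : (0:E) ∈ c • B := ⟨0, h0B, smul_zero c⟩
      simpa using hsep 0 h0
    have hBpt : ∀ b ∈ B, |e' b| ≤ u / c := by
      intro b hb
      have hb' : -b ∈ B := by
        have := hBbal (-1) (by norm_num) (Set.smul_mem_smul_set (a := (-1:ℝ)) hb)
        simpa using this
      have h1 : e' (c • b) < u := hsep _ (Set.smul_mem_smul_set hb)
      have h2 : e' (c • (-b)) < u := hsep _ (Set.smul_mem_smul_set hb')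
      rw [_root_.map_smul, smul_eq_mul] at h1 h2
      rw [map_neg, mul_neg] at h2
      rw [abs_le]
      constructor
      · rw [neg_le, ← neg_mul] at *
        rw [le_div_iff₀ hc0]
        nlinarith
      · rw [le_div_iff₀ hc0]
        nlinarith
    obtain ⟨hsm, hcomp⟩ := hweakSmooth e'
    have hbd : ∀ y : Rd d, ‖y - x₀‖ ≤ 1 → ∀ β, msize β = msize α + 2 →
        ‖pD β (fun z => e' (f z)) y‖ ≤ R * (u / c) := by
      intro y hy β hβ
      obtain ⟨b, hb, hbe⟩ := hbound y hy β hβ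
      rw [show pD β (fun z => e' (f z)) y = e' (D β y) from congrFun (hcomp β) y,
        ← hbe, _root_.map_smul, smul_eq_mul, Real.norm_eq_abs, abs_mul, abs_of_pos hR]
      exact mul_le_mul_of_nonneg_left (hBpt b hb) hR.le
    have hst := scalar_taylor hsm x₀ x α (M := R * (u / c)) (by positivity) hx1 hbd
    have hval : pD α (fun z => e' (f z)) x - pD α (fun z => e' (f z)) x₀ -
        ∑ j, (x j - x₀ j) • pD (α + unitIdx j) (fun z => e' (f z)) x₀ = e' v := by
      rw [hv, map_sub, map_sub, map_sum]
      congr 1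
      · congr 1
        · exact congrFun (hcomp α) x
        · exact congrFun (hcomp α) x₀
      · refine Finset.sum_congr rfl fun j _ => ?_
        rw [_root_.map_smul, congrFun (hcomp (α + unitIdx j)) x₀]
    rw [hval] at hst
    have habs : |e' v| ≤ u := by
      refine hst.trans (le_of_eq ?_)
      rw [hc]
      field_simp
    have := abs_le.1 habs
    linarith [hu]
  exact gauge_le_of_mem hc0.le hmem
end
end

section
/- Let M be a weight sequence satisfying (M.2)*. Then there exists a non-decreasing continuous function ν : [0,∞) → [0,∞) such that (i) ν ≍ ν_M, i.e., ν(t) = O(ν_M(t)) and ν_M(t) = O(ν(t)) as t → ∞; and (ii) there exist a continuous function η : [0,∞) → [0,∞) with η(t) = o(ν(t)) as t → ∞ and N ∈ ℕ such that |ν(t_1) − ν(t_2)| ≤ η(t_2)(1 + |t_1 − t_2|)^N for all t_1, t_2 ≥ 0. -/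
open Filter MeasureTheory
open scoped BigOperators

noncomputable section

/-- `M` is a weight sequence: positive, normalized, `M_p^{1/p} → ∞`, log-convex. -/
def IsWeightSeq (M : ℕ → ℝ) : Prop :=
  (∀ p, 0 < M p) ∧ M 0 = 1 ∧ M 1 = 1 ∧
  Tendsto (fun p : ℕ => (M p) ^ ((p : ℝ)⁻¹)) atTop atTop ∧
  ∀ p : ℕ, 1 ≤ p → (M p)^2 ≤ M (p-1) * M (p+1)

/-- Condition (M.2) with explicit constants `C₀, H ≥ 1`. -/
def HasM2 (M : ℕ → ℝ) (C₀ H : ℝ) : Prop :=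
  1 ≤ C₀ ∧ 1 ≤ H ∧ ∀ p q : ℕ, M (p+q) ≤ C₀ * H^(p+q) * M p * M q

/-- Condition (M.2). -/
def M2 (M : ℕ → ℝ) : Prop := ∃ C₀ H, HasM2 M C₀ H

/-- Condition (M.2)*: `2 m_p ≤ m_{Np}` for `p ≥ p₀`. -/
def M2star (M : ℕ → ℝ) : Prop :=
  ∃ p₀ N : ℕ, 0 < p₀ ∧ 0 < N ∧
    ∀ p, p₀ ≤ p → 2 * (M p / M (p-1)) ≤ M (N*p) / M (N*p - 1)

/-- Associated function `ν_M(t) = sup_p log(t^p / M_p)`. -/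
def nuA (M : ℕ → ℝ) (t : ℝ) : ℝ := ⨆ p : ℕ, Real.log (t ^ p / M p)

namespace Stmt3Aux

variable (M : ℕ → ℝ)

/-- quotient sequence m_p = M_p / M_{p-1} -/
def mq (p : ℕ) : ℝ := M p / M (p - 1)

def Sb (b : ℝ) : Set ℕ := {p | M p ≤ b * M (p - 1)}

def lam (b : ℝ) : ℕ := sSup (Sb M b)

def fA (t : ℝ) (p : ℕ) : ℝ := Real.log (t ^ p / M p)

variable {M}

structure WS : Prop where
  pos : ∀ p, 0 < M p
  one0 : M 0 = 1
  one1 : M 1 = 1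
  tend : Tendsto (fun p : ℕ => (M p) ^ ((p : ℝ)⁻¹)) atTop atTop
  conv : ∀ p : ℕ, 1 ≤ p → (M p)^2 ≤ M (p-1) * M (p+1)

theorem ws_of (h : IsWeightSeq M) : WS (M := M) :=
  ⟨h.1, h.2.1, h.2.2.1, h.2.2.2.1, h.2.2.2.2⟩

theorem mq_pos (h : WS (M := M)) (p : ℕ) : 0 < mq M p := div_pos (h.pos p) (h.pos _)

theorem mq_succ_le (h : WS (M := M)) (p : ℕ) (hp : 1 ≤ p) : mq M p ≤ mq M (p+1) := by
  have hc := h.conv p hp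
  have h1 : (p+1) - 1 = p := by omega
  unfold mq
  rw [h1]
  rw [div_le_div_iff₀ (h.pos _) (h.pos _)]
  nlinarith [h.pos p, h.pos (p-1), h.pos (p+1), hc]

theorem mq_mono (h : WS (M := M)) {p q : ℕ} (hp : 1 ≤ p) (hpq : p ≤ q) :
    mq M p ≤ mq M q := by
  induction q, hpq using Nat.le_induction with
  | base => exact le_refl _
  | succ n hn ih => exact le_trans ih (mq_succ_le h n (le_trans hp hn))

theorem mq_one (h : WS (M := M)) : mq M 1 = 1 := by
  unfold mq; simp [h.one0, h.one1]

theorem one_le_mq (h : WS (M := M)) {p : ℕ} (hp : 1 ≤ p) : 1 ≤ mq M p := by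
  rw [← mq_one h]; exact mq_mono h le_rfl hp

theorem M_succ (h : WS (M := M)) (p : ℕ) : M (p+1) = M p * mq M (p+1) := by
  unfold mq
  simp only [Nat.add_sub_cancel]
  rw [mul_comm, div_mul_cancel₀ _ (h.pos p).ne']

theorem one_le_M (h : WS (M := M)) (p : ℕ) : 1 ≤ M p := by
  induction p with
  | zero => rw [h.one0]
  | succ n ih =>
      rw [M_succ h n]
      nlinarith [one_le_mq h (p := n+1) (by omega), h.pos n]

theorem M_le_mq_pow (h : WS (M := M)) (p : ℕ) : M p ≤ mq M (p+1) ^ p := by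
  induction p with
  | zero => simp [h.one0]
  | succ n ih =>
      rw [M_succ h n, pow_succ]
      have h1 : mq M (n+1) ≤ mq M (n+2) := mq_succ_le h (n+1) (by omega)
      have h2 : mq M (n+1) ^ n ≤ mq M (n+2) ^ n :=
        pow_le_pow_left₀ (le_of_lt (mq_pos h _)) h1 n
      have h3 : 0 < mq M (n+1) := mq_pos h _
      nlinarith [h.pos n, pow_pos (mq_pos h (n+2)) n]

theorem mq_self_pow (h : WS (M := M)) (p : ℕ) (hp : 1 ≤ p) : M p ≤ mq M p ^ p := by
  calc M p = M (p-1) * mq M p := by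
        have hrw : p - 1 + 1 = p := by omega
        have e := M_succ h (p-1)
        rw [hrw] at e
        exact e
      _ ≤ mq M p ^ (p-1) * mq M p := by
        have := M_le_mq_pow h (p-1)
        have hrw : p - 1 + 1 = p := by omega
        rw [hrw] at this
        nlinarith [mq_pos h p]
      _ = mq M p ^ p := by
        rw [← pow_succ]
        congr 1
        omega

/-- the quotients eventually exceed every bound -/
theorem mq_big (h : WS (M := M)) (b : ℝ) : ∃ q : ℕ, 1 ≤ q ∧ ∀ p, q ≤ p → b < mq M p := by
  have := h.tend.eventually_gt_atTop b
  rw [eventually_atTop] at this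
  obtain ⟨q, hq⟩ := this
  refine ⟨max q 1, le_max_right _ _, fun p hp => ?_⟩
  have hq1 : q ≤ p := le_trans (le_max_left _ _) hp
  have hp1 : 1 ≤ p := le_trans (le_max_right _ _) hp
  have h1 : b < (M p) ^ ((p : ℝ)⁻¹) := hq p hq1
  refine lt_of_lt_of_le h1 ?_
  have h2 : M p ≤ mq M p ^ p := mq_self_pow h p hp1
  have hmq : (0:ℝ) < mq M p := mq_pos h p
  have h3 : (M p) ^ ((p:ℝ)⁻¹) ≤ (mq M p ^ p) ^ ((p:ℝ)⁻¹) :=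
    Real.rpow_le_rpow (le_of_lt (h.pos p)) h2 (by positivity)
  refine le_trans h3 ?_
  rw [← Real.rpow_natCast (mq M p) p, ← Real.rpow_mul (le_of_lt hmq)]
  rw [mul_inv_cancel₀ (by exact_mod_cast Nat.cast_ne_zero.mpr (by omega : p ≠ 0))]
  rw [Real.rpow_one]

theorem zero_mem_Sb (h : WS (M := M)) {b : ℝ} (hb : 1 ≤ b) : 0 ∈ Sb M b := by
  show M 0 ≤ b * M (0-1)
  simp only [Nat.zero_sub, h.one0]
  linarith

theorem Sb_nonempty (h : WS (M := M)) {b : ℝ} (hb : 1 ≤ b) : (Sb M b).Nonempty :=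
  ⟨0, zero_mem_Sb h hb⟩

theorem mem_Sb_iff (h : WS (M := M)) {b : ℝ} {p : ℕ} :
    p ∈ Sb M b ↔ M p ≤ b * M (p-1) := Iff.rfl

theorem mq_le_of_mem (h : WS (M := M)) {b : ℝ} {p : ℕ} (hp : p ∈ Sb M b) :
    mq M p ≤ b := by
  rw [mem_Sb_iff h] at hp
  unfold mq
  rw [div_le_iff₀ (h.pos _)]
  linarith

theorem mem_of_mq_le (h : WS (M := M)) {b : ℝ} {p : ℕ} (hp : mq M p ≤ b) :
    p ∈ Sb M b := by
  rw [mem_Sb_iff h]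
  unfold mq at hp
  rw [div_le_iff₀ (h.pos _)] at hp
  linarith

theorem Sb_bdd (h : WS (M := M)) (b : ℝ) : BddAbove (Sb M b) := by
  obtain ⟨q, hq1, hq⟩ := mq_big h b
  refine ⟨q, fun s hs => ?_⟩
  by_contra hc
  exact absurd (mq_le_of_mem h hs) (not_le.mpr (hq s (by omega)))

theorem lam_mem (h : WS (M := M)) {b : ℝ} (hb : 1 ≤ b) : lam M b ∈ Sb M b :=
  Nat.sSup_mem (Sb_nonempty h hb) (Sb_bdd h b)

theorem le_lam (h : WS (M := M)) {b : ℝ} {p : ℕ} (hp : p ∈ Sb M b) : p ≤ lam M b :=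
  le_csSup (Sb_bdd h b) hp

theorem lt_mq_of_lam_lt (h : WS (M := M)) {b : ℝ} (hb : 1 ≤ b) {j : ℕ}
    (hj : lam M b < j) : b < mq M j := by
  have h1 : lam M b + 1 ∉ Sb M b := fun hc => by
    have := le_lam h hc; omega
  have h2 : b < mq M (lam M b + 1) := by
    by_contra hc
    push_neg at hc
    exact h1 (mem_of_mq_le h hc)
  exact lt_of_lt_of_le h2 (mq_mono h (by omega) (by omega))

theorem mq_le_of_le_lam (h : WS (M := M)) {b : ℝ} (hb : 1 ≤ b) {p : ℕ}
    (hp1 : 1 ≤ p) (hp : p ≤ lam M b) : mq M p ≤ b := by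
  by_contra hc
  push_neg at hc
  -- then lam itself has mq > b? use monotonicity: mq (lam) ≥ mq p > b, contradicting lam ∈ Sb
  have hlam1 : 1 ≤ lam M b := le_trans hp1 hp
  have := mq_le_of_mem h (lam_mem h hb)
  have := mq_mono h hp1 hp
  linarith

theorem M_le_pow_of_le_lam (h : WS (M := M)) {b : ℝ} (hb : 1 ≤ b) :
    ∀ p, p ≤ lam M b → M p ≤ b ^ p := by
  intro p
  induction p with
  | zero => intro _; simp [h.one0]
  | succ n ih =>
      intro hn
      have h1 : M n ≤ b ^ n := ih (by omega)
      have h2 : mq M (n+1) ≤ b := mq_le_of_le_lam h hb (by omega) hn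
      rw [M_succ h n, pow_succ]
      have hb0 : (0:ℝ) < b := lt_of_lt_of_le one_pos hb
      nlinarith [h.pos n, pow_pos hb0 n, mq_pos h (n+1)]

theorem lam_mono (h : WS (M := M)) {b b' : ℝ} (hb : 1 ≤ b) (hbb : b ≤ b') :
    lam M b ≤ lam M b' := by
  refine le_lam h ?_
  have := lam_mem h hb
  rw [mem_Sb_iff h] at this ⊢
  nlinarith [h.pos (lam M b - 1)]

theorem fA_pos_arg (h : WS (M := M)) {b : ℝ} (hb : 0 < b) (p : ℕ) :
    0 < b ^ p / M p := div_pos (pow_pos hb p) (h.pos p)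

/-- telescoping decrease: beyond L where all quotients exceed b, terms decrease -/
theorem tel (h : WS (M := M)) {b : ℝ} (hb : 1 ≤ b) {L : ℕ}
    (hL : ∀ j, L < j → b ≤ mq M j) : ∀ p, L ≤ p → fA M b p ≤ fA M b L := by
  intro p hp
  induction p, hp using Nat.le_induction with
  | base => exact le_refl _
  | succ n hn ih =>
      refine le_trans ?_ ih
      unfold fA
      have hb0 : (0:ℝ) < b := lt_of_lt_of_le one_pos hb
      have harg : b ^ (n+1) / M (n+1) ≤ b ^ n / M n := by
        rw [div_le_div_iff₀ (h.pos _) (h.pos _), pow_succ]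
        have hmq : b ≤ mq M (n+1) := hL (n+1) (by omega)
        unfold mq at hmq
        rw [le_div_iff₀ (h.pos _)] at hmq
        simp only [Nat.add_sub_cancel] at hmq
        nlinarith [pow_pos hb0 n, h.pos n, h.pos (n+1)]
      exact Real.log_le_log (fA_pos_arg h hb0 (n+1)) harg

theorem bdd_fA (h : WS (M := M)) {t : ℝ} (ht : 0 ≤ t) :
    BddAbove (Set.range (fA M t)) := by
  rcases le_or_gt t 1 with h1 | h1
  · refine ⟨0, fun x hx => ?_⟩
    obtain ⟨p, rfl⟩ := hx
    unfold fA
    refine Real.log_nonpos (div_nonneg (pow_nonneg ht p) (h.pos p).le) ?_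
    rw [div_le_one (h.pos p)]
    calc t ^ p ≤ 1 ^ p := pow_le_pow_left₀ ht h1 p
      _ = 1 := one_pow p
      _ ≤ M p := one_le_M h p
  · obtain ⟨q, hq1, hq⟩ := mq_big h t
    have ht0 : (0:ℝ) < t := lt_trans one_pos h1
    have hlogt : 0 ≤ Real.log t := Real.log_nonneg (le_of_lt h1)
    refine ⟨(q:ℝ) * Real.log t, fun x hx => ?_⟩
    obtain ⟨p, rfl⟩ := hx
    have key : ∀ p', p' ≤ q → fA M t p' ≤ (q:ℝ) * Real.log t := by
      intro p' hp'
      unfold fA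
      calc Real.log (t ^ p' / M p') ≤ Real.log (t ^ p') := by
            refine Real.log_le_log (fA_pos_arg h ht0 p') ?_
            calc t ^ p' / M p' ≤ t ^ p' / 1 :=
                  div_le_div_of_nonneg_left (le_of_lt (pow_pos ht0 p')) one_pos (one_le_M h p')
              _ = t ^ p' := div_one _
        _ = (p' : ℝ) * Real.log t := Real.log_pow t p'
        _ ≤ (q:ℝ) * Real.log t := by
            have : (p':ℝ) ≤ (q:ℝ) := by exact_mod_cast hp'
            nlinarith
    rcases le_or_gt p q with hpq | hpq
    · exact key p hpq
    · refine le_trans (tel h (le_of_lt h1) (fun j hj => le_of_lt (hq j (by omega))) p (by omega)) (key q le_rfl)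

theorem fA_le_nuA (h : WS (M := M)) {t : ℝ} (ht : 0 ≤ t) (p : ℕ) :
    fA M t p ≤ nuA M t := le_ciSup (bdd_fA h ht) p

theorem nuA_le (h : WS (M := M)) {t C : ℝ} (hC : ∀ p, fA M t p ≤ C) :
    nuA M t ≤ C := ciSup_le hC

theorem nuA_nonneg (h : WS (M := M)) {t : ℝ} (ht : 0 ≤ t) : 0 ≤ nuA M t := by
  have := fA_le_nuA h ht 0
  unfold fA at this
  simpa [h.one0] using this

theorem nuA_mono (h : WS (M := M)) {s t : ℝ} (hs : 0 ≤ s) (hst : s ≤ t) :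
    nuA M s ≤ nuA M t := by
  rcases eq_or_lt_of_le hs with rfl | hs0
  · -- s = 0 : every term of nuA 0 is ≤ nuA t
    refine nuA_le h (fun p => ?_)
    unfold fA
    rcases Nat.eq_zero_or_pos p with rfl | hp
    · simpa [h.one0] using nuA_nonneg h (le_trans hs hst)
    · rw [zero_pow (by omega), zero_div, Real.log_zero]
      exact nuA_nonneg h (le_trans hs hst)
  · refine nuA_le h (fun p => ?_)
    refine le_trans ?_ (fA_le_nuA h (by linarith) p)
    unfold fA
    refine Real.log_le_log (fA_pos_arg h hs0 p) ?_
    exact div_le_div_of_nonneg_right (pow_le_pow_left₀ (le_of_lt hs0) hst p) (le_of_lt (h.pos p))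
    
theorem log_le_nuA (h : WS (M := M)) {t : ℝ} (ht : 0 ≤ t) : Real.log t ≤ nuA M t := by
  have := fA_le_nuA h ht 1
  unfold fA at this
  simpa [h.one1] using this

theorem nuA_one (h : WS (M := M)) : nuA M 1 = 0 := by
  refine le_antisymm (nuA_le h (fun p => ?_)) (nuA_nonneg h zero_le_one)
  unfold fA
  refine Real.log_nonpos (div_nonneg (by norm_num) (h.pos p).le) ?_
  rw [one_pow, div_le_one (h.pos p)]
  exact one_le_M h p

/-- THE core increment inequality -/
theorem inc (h : WS (M := M)) {a b : ℝ} (ha : 1 ≤ a) (hab : a ≤ b) :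
    nuA M b ≤ nuA M a + (lam M b : ℝ) * Real.log (b / a) := by
  have hb : 1 ≤ b := le_trans ha hab
  have ha0 : (0:ℝ) < a := lt_of_lt_of_le one_pos ha
  have hb0 : (0:ℝ) < b := lt_of_lt_of_le one_pos hb
  have hlog : 0 ≤ Real.log (b / a) := Real.log_nonneg ((one_le_div ha0).mpr hab)
  have key : ∀ p, p ≤ lam M b → fA M b p ≤ nuA M a + (lam M b : ℝ) * Real.log (b / a) := by
    intro p hp
    have harg : b ^ p / M p = a ^ p / M p * (b / a) ^ p := by
      have hM := ne_of_gt (h.pos p)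
      have haa := ne_of_gt ha0
      rw [div_pow, div_mul_div_comm, mul_comm (a^p) (b^p), mul_div_mul_right _ _ (pow_ne_zero p haa)]
    have hsplit : fA M b p = fA M a p + (p:ℝ) * Real.log (b / a) := by
      unfold fA
      rw [harg, Real.log_mul (ne_of_gt (fA_pos_arg h ha0 p))
        (ne_of_gt (pow_pos (div_pos hb0 ha0) p)), Real.log_pow]
    rw [hsplit]
    have h1 : fA M a p ≤ nuA M a := fA_le_nuA h (le_of_lt ha0) p
    have h2 : (p:ℝ) * Real.log (b/a) ≤ (lam M b : ℝ) * Real.log (b/a) := by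
      have : (p:ℝ) ≤ (lam M b : ℝ) := by exact_mod_cast hp
      nlinarith
    linarith
  refine nuA_le h (fun p => ?_)
  rcases le_or_gt p (lam M b) with hp | hp
  · exact key p hp
  · refine le_trans (tel h hb (fun j hj => le_of_lt (lt_mq_of_lam_lt h hb hj)) p (le_of_lt hp)) ?_
    exact key (lam M b) le_rfl

section Star
variable (h : WS (M := M)) {p₀ N : ℕ} (hp₀ : 0 < p₀) (hN : 0 < N)
  (hstar : ∀ p, p₀ ≤ p → 2 * mq M p ≤ mq M (N*p))
include h hp₀ hN hstar

theorem pow2_le_mq : ∀ k : ℕ, (2:ℝ)^k ≤ mq M (p₀ * N^k) := by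
  intro k
  induction k with
  | zero => simpa using one_le_mq h (by omega)
  | succ n ih =>
      have h1 : p₀ * N^(n+1) = N * (p₀ * N^n) := by ring
      rw [h1, pow_succ]
      have h2 := hstar (p₀ * N^n) (Nat.le_mul_of_pos_right p₀ (pow_pos hN n))
      nlinarith [mq_pos h (p₀ * N^n)]

theorem lam_lt_of_lt_pow2 {b : ℝ} (hb : 1 ≤ b) {k : ℕ} (hbk : b < (2:ℝ)^k) :
    lam M b < p₀ * N^k := by
  by_contra hc
  push_neg at hc
  have h1 : mq M (p₀ * N^k) ≤ mq M (lam M b) := mq_mono h (Nat.one_le_iff_ne_zero.mpr (Nat.mul_ne_zero (by omega) (pow_ne_zero k (by omega)))) hc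
  have h2 : mq M (lam M b) ≤ b := mq_le_of_mem h (lam_mem h hb)
  have h3 := pow2_le_mq h hp₀ hN hstar k
  linarith

/-- polynomial bound for lam -/
theorem lam_poly {b : ℝ} (hb : 1 ≤ b) :
    (lam M b : ℝ) ≤ (p₀:ℝ) * (N:ℝ)^2 * b ^ N := by
  have hb0 : (0:ℝ) < b := lt_of_lt_of_le one_pos hb
  set x : ℝ := Real.logb 2 b with hx
  have hx0 : 0 ≤ x := Real.logb_nonneg one_lt_two hb
  set k : ℕ := ⌈x⌉₊ + 1 with hk
  have hbk : b < (2:ℝ)^k := by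
    have h1 : b = (2:ℝ) ^ x := (Real.rpow_logb two_pos (by norm_num) hb0).symm
    have h2 : (2:ℝ) ^ x ≤ (2:ℝ)^((⌈x⌉₊:ℝ)) :=
      Real.rpow_le_rpow_of_exponent_le one_le_two (Nat.le_ceil x)
    have h3 : ((2:ℝ))^((⌈x⌉₊:ℝ)) = (2:ℝ)^(⌈x⌉₊:ℕ) := Real.rpow_natCast 2 ⌈x⌉₊
    have h4 : (2:ℝ)^(⌈x⌉₊:ℕ) < (2:ℝ)^k := by
      rw [hk]
      exact pow_lt_pow_right₀ one_lt_two (by omega)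
    rw [h1]
    calc (2:ℝ)^x ≤ (2:ℝ)^((⌈x⌉₊:ℝ)) := h2
      _ = (2:ℝ)^(⌈x⌉₊:ℕ) := h3
      _ < (2:ℝ)^k := h4
  have hlt := lam_lt_of_lt_pow2 h hp₀ hN hstar hb (k := k) hbk
  have h5 : (lam M b : ℝ) ≤ (p₀:ℝ) * (N:ℝ)^k := by
    have : (lam M b : ℝ) ≤ ((p₀ * N^k : ℕ):ℝ) := by exact_mod_cast le_of_lt hlt
    simpa [Nat.cast_mul, Nat.cast_pow] using this
  refine le_trans h5 ?_
  -- N^k ≤ N^2 * b^N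
  have hN1 : (1:ℝ) ≤ (N:ℝ) := by exact_mod_cast hN
  have h6 : ((N:ℝ))^k = (N:ℝ)^((k:ℝ)) := (Real.rpow_natCast _ _).symm
  have h7 : (k:ℝ) ≤ x + 2 := by
    have := Nat.ceil_lt_add_one hx0
    push_cast [hk]
    linarith
  have h8 : (N:ℝ)^((k:ℝ)) ≤ (N:ℝ)^(x + 2) :=
    Real.rpow_le_rpow_of_exponent_le hN1 h7
  have hNpos : (0:ℝ) < N := by exact_mod_cast hN
  have h9 : (N:ℝ)^(x+2) = (N:ℝ)^2 * (N:ℝ)^x := by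
    rw [Real.rpow_add hNpos, show ((2:ℝ)) = ((2:ℕ):ℝ) by norm_num, Real.rpow_natCast]
    ring
  have h10 : (N:ℝ)^x ≤ b ^ N := by
    have hid : (N:ℝ)^x = b ^ (Real.logb 2 (N:ℝ)) := by
      rw [Real.rpow_def_of_pos hNpos, Real.rpow_def_of_pos hb0, hx]
      unfold Real.logb
      congr 1
      ring
    rw [hid]
    have hexp : Real.logb 2 (N:ℝ) ≤ (N:ℝ) := by
      unfold Real.logb
      rw [div_le_iff₀ (Real.log_pos one_lt_two)]
      have hlogN : Real.log (N:ℝ) ≤ Real.log ((2:ℝ)^(N:ℕ)) := by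
        refine Real.log_le_log hNpos ?_
        exact_mod_cast le_of_lt (Nat.lt_two_pow_self)
      rw [Real.log_pow] at hlogN
      linarith
    calc b ^ (Real.logb 2 (N:ℝ)) ≤ b ^ ((N:ℝ)) :=
          Real.rpow_le_rpow_of_exponent_le hb hexp
      _ = b ^ (N:ℕ) := Real.rpow_natCast b N
  calc (p₀:ℝ) * (N:ℝ)^k = (p₀:ℝ) * (N:ℝ)^((k:ℝ)) := by rw [h6]
    _ ≤ (p₀:ℝ) * ((N:ℝ)^2 * (N:ℝ)^x) := by
        have hp0 : (0:ℝ) ≤ (p₀:ℝ) := by positivity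
        exact mul_le_mul_of_nonneg_left (le_trans h8 (le_of_eq h9)) hp0
    _ ≤ (p₀:ℝ) * ((N:ℝ)^2 * b^N) := by gcongr
    _ = (p₀:ℝ) * (N:ℝ)^2 * b^N := by ring

/-- doubling inequality for lam -/
theorem lam_doub {b : ℝ} (hb : 1 ≤ b) :
    lam M (2*b) ≤ N * (lam M b + p₀ + 1) := by
  set q := lam M (2*b) with hq
  have hq_mem : q ∈ Sb M (2*b) := lam_mem h (by linarith)
  set r := q / N with hr
  have hqlt : q < (r+1) * N := by
    calc q = N * r + q % N := by rw [hr]; exact (Nat.div_add_mod q N).symm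
      _ < N * r + N := Nat.add_lt_add_left (Nat.mod_lt q hN) (N*r)
      _ = (r+1) * N := by ring
  rcases lt_or_ge r p₀ with hcase | hcase
  · refine le_of_lt (lt_of_lt_of_le hqlt ?_)
    nlinarith [Nat.zero_le (lam M b)]
  · -- r ≥ p₀
    have hrq : N * r ≤ q := by
      rw [hr, mul_comm]
      exact Nat.div_mul_le_self q N
    have hr1 : 1 ≤ r := le_trans hp₀ hcase
    have hNr1 : 1 ≤ N * r := Nat.one_le_iff_ne_zero.mpr (Nat.mul_ne_zero (by omega) (by omega))
    have h1 : 2 * mq M r ≤ mq M (N * r) := hstar r hcase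
    have h2 : mq M (N*r) ≤ mq M q := by
      rcases eq_or_lt_of_le hrq with heq | hlt
      · rw [heq]
      · exact mq_mono h hNr1 hrq
    have h3 : mq M q ≤ 2*b := mq_le_of_mem h hq_mem
    have h4 : mq M r ≤ b := by linarith
    have h5 : r ≤ lam M b := le_lam h (mem_of_mq_le h h4)
    refine le_of_lt (lt_of_lt_of_le hqlt ?_)
    nlinarith [Nat.zero_le (lam M b)]

/-- iterated doubling -/
theorem lam_iter {b : ℝ} (hb : 1 ≤ b) (k : ℕ) :
    lam M ((2:ℝ)^k * b) ≤ N^k * (lam M b + (p₀ + 1) * k) := by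
  induction k with
  | zero => simpa using le_refl (lam M b)
  | succ n ih =>
      have h1 : (2:ℝ)^(n+1) * b = 2 * ((2:ℝ)^n * b) := by ring
      have hb2 : (1:ℝ) ≤ (2:ℝ)^n * b := by
        have : (1:ℝ) ≤ (2:ℝ)^n := one_le_pow₀ one_le_two
        nlinarith
      rw [h1]
      calc lam M (2 * ((2:ℝ)^n * b)) ≤ N * (lam M ((2:ℝ)^n * b) + p₀ + 1) :=
            lam_doub h hp₀ hN hstar hb2
        _ ≤ N * (N^n * (lam M b + (p₀+1)*n) + p₀ + 1) := by
            have h2 : lam M ((2:ℝ)^n * b) + p₀ + 1 ≤ N^n * (lam M b + (p₀+1)*n) + p₀ + 1 := by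
              omega
            exact Nat.mul_le_mul_left N h2
        _ = N^(n+1) * (lam M b + (p₀+1)*n) + N*(p₀+1) := by ring
        _ ≤ N^(n+1) * (lam M b + (p₀+1)*n) + N^(n+1)*(p₀+1) := by
            have h3 : N ≤ N^(n+1) := Nat.le_self_pow (by omega) N
            exact Nat.add_le_add_left (Nat.mul_le_mul_right _ h3) _
        _ = N^(n+1) * (lam M b + (p₀+1)*(n+1)) := by ring

end Star

theorem lam_le_two_nuA (h : WS (M := M)) {b : ℝ} (hb : 1 ≤ b) :
    (lam M b : ℝ) ≤ 2 * nuA M (2*b) := by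
  set q := lam M b with hq
  have hb0 : (0:ℝ) < b := lt_of_lt_of_le one_pos hb
  have hMq : M q ≤ b ^ q := M_le_pow_of_le_lam h hb q le_rfl
  have h1 : fA M (2*b) q ≤ nuA M (2*b) := fA_le_nuA h (by linarith) q
  have h2 : (q:ℝ) * Real.log 2 ≤ fA M (2*b) q := by
    unfold fA
    have harg : (2:ℝ)^q ≤ (2*b)^q / M q := by
      rw [le_div_iff₀ (h.pos q), mul_pow]
      nlinarith [pow_pos (by norm_num : (0:ℝ) < 2) q, pow_pos hb0 q, pow_nonneg (by norm_num : (0:ℝ) ≤ 2) q,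
        mul_le_mul_of_nonneg_left hMq (pow_nonneg (by norm_num : (0:ℝ) ≤ 2) q)]
    calc (q:ℝ) * Real.log 2 = Real.log ((2:ℝ)^q) := (Real.log_pow 2 q).symm
      _ ≤ Real.log ((2*b)^q / M q) := Real.log_le_log (by positivity) harg
  have hlog2 : (1:ℝ)/2 ≤ Real.log 2 := by
    have := Real.log_two_gt_d9
    linarith
  have hq0 : (0:ℝ) ≤ (q:ℝ) := Nat.cast_nonneg q
  nlinarith [mul_le_mul_of_nonneg_left hlog2 hq0]

section Doub
variable (h : WS (M := M)) {p₀ N : ℕ} (hp₀ : 0 < p₀) (hN : 0 < N)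
  (hstar : ∀ p, p₀ ≤ p → 2 * mq M p ≤ mq M (N*p))
include h hp₀ hN hstar

/-- doubling for the associated function -/
theorem nuA_doub {b : ℝ} (hb : 2 ≤ b) :
    nuA M (2*b) ≤ (1 + 2*(N:ℝ)^2) * nuA M b + 2*(N:ℝ)^2*((p₀:ℝ)+1) := by
  have hb1 : (1:ℝ) ≤ b := by linarith
  have hb2 : (1:ℝ) ≤ b/2 := by linarith
  have h1 : nuA M (2*b) ≤ nuA M b + (lam M (2*b) : ℝ) * Real.log (2*b/b) := by
    have := inc h hb1 (by linarith : b ≤ 2*b)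
    convert this using 3
  have hlog : Real.log (2*b/b) ≤ 1 := by
    have : 2*b/b = 2 := by field_simp
    rw [this]
    have h2 := Real.log_two_lt_d9
    linarith
  have hlam0 : (0:ℝ) ≤ (lam M (2*b) : ℝ) := Nat.cast_nonneg _
  have hlognn : 0 ≤ Real.log (2*b/b) := by
    have : 2*b/b = 2 := by field_simp
    rw [this]
    exact Real.log_nonneg one_le_two
  -- bound lam (2*b)
  have h3 : lam M (2*b) ≤ N^2 * (lam M (b/2) + (p₀+1)*2) := by
    have he : (2:ℝ)^2 * (b/2) = 2*b := by ring
    have := lam_iter h hp₀ hN hstar hb2 2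
    rw [he] at this
    exact this
  have h4 : (lam M (b/2) : ℝ) ≤ 2 * nuA M (2*(b/2)) := lam_le_two_nuA h hb2
  have h5 : 2*(b/2) = b := by ring
  rw [h5] at h4
  have h6 : (lam M (2*b) : ℝ) ≤ (N:ℝ)^2 * ((lam M (b/2):ℝ) + ((p₀:ℝ)+1)*2) := by
    have := h3
    have hc : ((N^2 * (lam M (b/2) + (p₀+1)*2) : ℕ) : ℝ)
        = (N:ℝ)^2 * ((lam M (b/2):ℝ) + ((p₀:ℝ)+1)*2) := by push_cast; ring
    calc (lam M (2*b) : ℝ) ≤ ((N^2 * (lam M (b/2) + (p₀+1)*2) : ℕ) : ℝ) := by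
          exact_mod_cast this
      _ = _ := hc
  have hN2 : (0:ℝ) ≤ (N:ℝ)^2 := by positivity
  have hnuAb : 0 ≤ nuA M b := nuA_nonneg h (by linarith)
  have hmul : (lam M (2*b) : ℝ) * Real.log (2*b/b) ≤ (lam M (2*b) : ℝ) := by
    nlinarith
  nlinarith [h6, h4]

end Doub

def gg (M : ℕ → ℝ) : ℝ → ℝ := fun x => nuA M (max x 0)

def nu (M : ℕ → ℝ) : ℝ → ℝ := fun t => ∫ x in t..(t+1), gg M x

theorem gg_mono (h : WS (M := M)) : Monotone (gg M) := by
  intro x y hxy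
  exact nuA_mono h (le_max_right x 0) (max_le_max hxy (le_refl 0))

theorem gg_intble (h : WS (M := M)) (a b : ℝ) :
    IntervalIntegrable (gg M) MeasureTheory.volume a b :=
  ((gg_mono h).monotoneOn _).intervalIntegrable

theorem gg_shift_intble (h : WS (M := M)) (d a b : ℝ) :
    IntervalIntegrable (fun x => gg M (x + d)) MeasureTheory.volume a b := by
  have : Monotone (fun x => gg M (x + d)) :=
    fun x y hxy => gg_mono h (by linarith)
  exact (this.monotoneOn _).intervalIntegrable

theorem nu_mono (h : WS (M := M)) : Monotone (nu M) := by
  intro s t hst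
  unfold nu
  have h1 : ∫ x in s..(s+1), gg M x ≤ ∫ x in s..(s+1), gg M (x + (t-s)) := by
    refine intervalIntegral.integral_mono_on (by linarith) (gg_intble h s (s+1))
      (gg_shift_intble h (t-s) s (s+1)) (fun x _ => gg_mono h (by linarith))
  have h2 : (∫ x in s..(s+1), gg M (x + (t-s)))
      = ∫ x in (s+(t-s))..((s+1)+(t-s)), gg M x :=
    intervalIntegral.integral_comp_add_right _ _
  have h3 : s + (t-s) = t := by ring
  have h4 : (s+1) + (t-s) = t+1 := by ring
  rw [h2, h3, h4] at h1
  exact h1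

theorem nu_lb (h : WS (M := M)) {t : ℝ} (ht : 0 ≤ t) : nuA M t ≤ nu M t := by
  unfold nu
  have h1 : ∫ x in t..(t+1), nuA M t ≤ ∫ x in t..(t+1), gg M x := by
    refine intervalIntegral.integral_mono_on (by linarith) intervalIntegrable_const
      (gg_intble h t (t+1)) (fun x hx => ?_)
    have : nuA M t = gg M t := by unfold gg; rw [max_eq_left ht]
    rw [this]
    exact gg_mono h hx.1
  simpa using h1

theorem nu_ub (h : WS (M := M)) {t : ℝ} (ht : 0 ≤ t) : nu M t ≤ nuA M (t+1) := by
  unfold nu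
  have h1 : ∫ x in t..(t+1), gg M x ≤ ∫ x in t..(t+1), nuA M (t+1) := by
    refine intervalIntegral.integral_mono_on (by linarith) (gg_intble h t (t+1))
      intervalIntegrable_const (fun x hx => ?_)
    have h2 : gg M (t+1) = nuA M (t+1) := by unfold gg; rw [max_eq_left (by linarith)]
    rw [← h2]
    exact gg_mono h hx.2
  simpa using h1

theorem nu_nonneg (h : WS (M := M)) {t : ℝ} (ht : 0 ≤ t) : 0 ≤ nu M t :=
  le_trans (nuA_nonneg h ht) (nu_lb h ht)

theorem nu_cont (h : WS (M := M)) : Continuous (nu M) := by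
  have hF : Continuous (fun y => ∫ x in (0:ℝ)..y, gg M x) :=
    intervalIntegral.continuous_primitive (fun a b => gg_intble h a b) 0
  have : nu M = fun t => (∫ x in (0:ℝ)..(t+1), gg M x) - ∫ x in (0:ℝ)..t, gg M x := by
    funext t
    rw [intervalIntegral.integral_interval_sub_left (gg_intble h 0 (t+1)) (gg_intble h 0 t)]
    rfl
  rw [this]
  exact (hF.comp (continuous_id.add continuous_const)).sub hF

theorem two_pow_ceil_ge {x : ℝ} (hx : 1 ≤ x) : x ≤ (2:ℝ)^(⌈Real.logb 2 x⌉₊ : ℕ) := by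
  have hx0 : (0:ℝ) < x := lt_of_lt_of_le one_pos hx
  have h1 : x = (2:ℝ) ^ (Real.logb 2 x) := (Real.rpow_logb two_pos (by norm_num) hx0).symm
  calc x = (2:ℝ) ^ (Real.logb 2 x) := h1
    _ ≤ (2:ℝ)^((⌈Real.logb 2 x⌉₊:ℝ)) := Real.rpow_le_rpow_of_exponent_le one_le_two (Nat.le_ceil _)
    _ = (2:ℝ)^((⌈Real.logb 2 x⌉₊:ℕ)) := Real.rpow_natCast 2 _

theorem Npow_ceil_le {N : ℕ} (hN : 0 < N) {x : ℝ} (hx : 1 ≤ x) :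
    ((N:ℝ))^((⌈Real.logb 2 x⌉₊ : ℕ)) ≤ (N:ℝ) * x^N := by
  have hx0 : (0:ℝ) < x := lt_of_lt_of_le one_pos hx
  have hN1 : (1:ℝ) ≤ (N:ℝ) := by exact_mod_cast hN
  have hNpos : (0:ℝ) < (N:ℝ) := by exact_mod_cast hN
  set y : ℝ := Real.logb 2 x with hy
  have hy0 : 0 ≤ y := Real.logb_nonneg one_lt_two hx
  have h1 : ((N:ℝ))^((⌈y⌉₊ : ℕ)) = (N:ℝ)^((⌈y⌉₊ : ℝ)) := (Real.rpow_natCast _ _).symm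
  have h2 : (N:ℝ)^((⌈y⌉₊:ℝ)) ≤ (N:ℝ)^(y+1) :=
    Real.rpow_le_rpow_of_exponent_le hN1 (le_of_lt (Nat.ceil_lt_add_one hy0))
  have h3 : (N:ℝ)^(y+1) = (N:ℝ) * (N:ℝ)^y := by
    rw [Real.rpow_add hNpos, Real.rpow_one]
    ring
  have h4 : (N:ℝ)^y ≤ x^N := by
    have hid : (N:ℝ)^y = x ^ (Real.logb 2 (N:ℝ)) := by
      rw [Real.rpow_def_of_pos hNpos, Real.rpow_def_of_pos hx0, hy]
      unfold Real.logb
      congr 1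
      ring
    rw [hid]
    have hexp : Real.logb 2 (N:ℝ) ≤ (N:ℝ) := by
      unfold Real.logb
      rw [div_le_iff₀ (Real.log_pos one_lt_two)]
      have hlogN : Real.log (N:ℝ) ≤ Real.log ((2:ℝ)^(N:ℕ)) := by
        refine Real.log_le_log hNpos ?_
        exact_mod_cast le_of_lt (Nat.lt_two_pow_self)
      rw [Real.log_pow] at hlogN
      linarith
    calc x ^ (Real.logb 2 (N:ℝ)) ≤ x ^ ((N:ℝ)) :=
          Real.rpow_le_rpow_of_exponent_le hx hexp
      _ = x ^ (N:ℕ) := Real.rpow_natCast x N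
  calc ((N:ℝ))^((⌈y⌉₊ : ℕ)) ≤ (N:ℝ)^(y+1) := h1 ▸ h2
    _ = (N:ℝ) * (N:ℝ)^y := h3
    _ ≤ (N:ℝ) * x^N := by nlinarith

theorem ceil_logb_le {x : ℝ} (hx : 1 ≤ x) : ((⌈Real.logb 2 x⌉₊ : ℕ) : ℝ) ≤ 2*x := by
  have hx0 : (0:ℝ) < x := lt_of_lt_of_le one_pos hx
  have h1 : Real.logb 2 x ≤ 2*(x-1) := by
    unfold Real.logb
    rw [div_le_iff₀ (Real.log_pos one_lt_two)]
    have h2 : Real.log x ≤ x - 1 := Real.log_le_sub_one_of_pos hx0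
    have h3 : (1:ℝ)/2 ≤ Real.log 2 := by
      have := Real.log_two_gt_d9; linarith
    nlinarith [Real.log_nonneg hx, sub_nonneg.mpr hx]
  have hy0 : 0 ≤ Real.logb 2 x := Real.logb_nonneg one_lt_two hx
  have := Nat.ceil_lt_add_one hy0
  linarith

end Stmt3Aux

set_option maxHeartbeats 2000000 in
/-- Regularization of the associated function for weight sequences satisfying (M.2)*
(Lemma 6.1). -/
theorem stmt3 (M : ℕ → ℝ) (hM : IsWeightSeq M) (h2s : M2star M) :
    ∃ ν : ℝ → ℝ, ContinuousOn ν (Set.Ici 0) ∧ MonotoneOn ν (Set.Ici 0) ∧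
      (∀ t : ℝ, 0 ≤ t → 0 ≤ ν t) ∧
      (∃ C : ℝ, 0 < C ∧ ∀ᶠ t in atTop, ν t ≤ C * nuA M t) ∧
      (∃ C : ℝ, 0 < C ∧ ∀ᶠ t in atTop, nuA M t ≤ C * ν t) ∧
      ∃ η : ℝ → ℝ, ContinuousOn η (Set.Ici 0) ∧ (∀ t : ℝ, 0 ≤ t → 0 ≤ η t) ∧
        (∀ ε : ℝ, 0 < ε → ∀ᶠ t in atTop, η t ≤ ε * ν t) ∧
        ∃ N : ℕ, ∀ t₁ t₂ : ℝ, 0 ≤ t₁ → 0 ≤ t₂ →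
          |ν t₁ - ν t₂| ≤ η t₂ * (1 + |t₁ - t₂|) ^ N := by
  have h : Stmt3Aux.WS (M := M) := Stmt3Aux.ws_of hM
  obtain ⟨p₀, N, hp₀, hN, hstar⟩ := h2s
  have hstar' : ∀ p, p₀ ≤ p → 2 * Stmt3Aux.mq M p ≤ Stmt3Aux.mq M (N*p) := by
    intro p hp
    have := hstar p hp
    unfold Stmt3Aux.mq
    exact this
  set P : ℝ := (p₀ : ℝ) with hPdef
  set n : ℝ := (N : ℝ) with hndef
  have hP1 : 1 ≤ P := by rw [hPdef]; exact_mod_cast hp₀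
  have hn1 : 1 ≤ n := by rw [hndef]; exact_mod_cast hN
  set A1 : ℝ := 1 + 2*n^2 with hA1def
  set A2 : ℝ := 2*n^2*(P+1) with hA2def
  have hA1pos : 0 < A1 := by rw [hA1def]; nlinarith
  have hA2pos : 0 < A2 := by rw [hA2def]; nlinarith
  have hdoub : ∀ b : ℝ, 2 ≤ b → nuA M (2*b) ≤ A1 * nuA M b + A2 := by
    intro b hb
    have := Stmt3Aux.nuA_doub h hp₀ hN hstar' hb
    rw [hA1def, hA2def]
    linarith
  set D : ℝ := P * n^2 * 2^(N+1) with hDdef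
  have hDpos : 0 < D := by rw [hDdef]; positivity
  set ν : ℝ → ℝ := Stmt3Aux.nu M with hνdef
  set η : ℝ → ℝ := fun t => D + n * (2 * ν (2*t+2) + 2*(P+1)) / (max t 1) with hηdef
  have hνmono : Monotone ν := Stmt3Aux.nu_mono h
  have hνnonneg : ∀ t : ℝ, 0 ≤ t → 0 ≤ ν t := fun t ht => Stmt3Aux.nu_nonneg h ht
  have hνlb : ∀ t : ℝ, 0 ≤ t → nuA M t ≤ ν t := fun t ht => Stmt3Aux.nu_lb h ht
  have hνub : ∀ t : ℝ, 0 ≤ t → ν t ≤ nuA M (t+1) := fun t ht => Stmt3Aux.nu_ub h ht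
  have hηD : ∀ t : ℝ, 0 ≤ t → D ≤ η t := by
    intro t ht
    rw [hηdef]
    have h1 : 0 ≤ ν (2*t+2) := hνnonneg _ (by linarith)
    have h2 : (0:ℝ) < max t 1 := lt_of_lt_of_le one_pos (le_max_right t 1)
    have h3 : 0 ≤ n * (2 * ν (2*t+2) + 2*(P+1)) / (max t 1) := by
      apply div_nonneg _ (le_of_lt h2)
      nlinarith
    simp only [le_add_iff_nonneg_right]
    exact h3
  have hηval : ∀ t : ℝ, 1 ≤ t → η t = D + n * (2 * ν (2*t+2) + 2*(P+1)) / t := by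
    intro t ht
    rw [hηdef]
    simp only [max_eq_left ht]
  refine ⟨ν, (Stmt3Aux.nu_cont h).continuousOn, hνmono.monotoneOn _, hνnonneg, ?_, ?_, η, ?_, ?_, ?_, N+2, ?_⟩
  · -- upper comparability
    refine ⟨A1 + A2, by linarith, ?_⟩
    filter_upwards [eventually_ge_atTop (3:ℝ),
      Real.tendsto_log_atTop.eventually (eventually_ge_atTop (1:ℝ))] with t ht3 hlog
    have ht0 : (0:ℝ) ≤ t := by linarith
    have hnuA1 : 1 ≤ nuA M t := le_trans hlog (Stmt3Aux.log_le_nuA h ht0)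
    have h1 : ν t ≤ nuA M (t+1) := hνub t ht0
    have h2 : nuA M (t+1) ≤ nuA M (2*t) := Stmt3Aux.nuA_mono h (by linarith) (by linarith)
    have h3 : nuA M (2*t) ≤ A1 * nuA M t + A2 := hdoub t (by linarith)
    nlinarith
  · -- lower comparability
    refine ⟨1, one_pos, ?_⟩
    filter_upwards [eventually_ge_atTop (0:ℝ)] with t ht0
    rw [one_mul]
    exact hνlb t ht0
  · -- η continuous
    have hc1 : Continuous fun t : ℝ => ν (2*t+2) :=
      (Stmt3Aux.nu_cont h).comp (by continuity)
    have hc2 : Continuous fun t : ℝ => n * (2 * ν (2*t+2) + 2*(P+1)) :=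
      continuous_const.mul ((continuous_const.mul hc1).add continuous_const)
    have hc3 : Continuous fun t : ℝ => max t 1 := continuous_id.max continuous_const
    have : Continuous η := by
      rw [hηdef]
      exact continuous_const.add (hc2.div hc3
        (fun t => ne_of_gt (lt_of_lt_of_le one_pos (le_max_right t 1))))
    exact this.continuousOn
  · -- η nonneg
    intro t ht
    exact le_trans (le_of_lt hDpos) (hηD t ht)
  · -- η small
    intro ε hε
    set c1 : ℝ := 2*n*A1^2 with hc1def
    set c2 : ℝ := n*(2*(A1*A2+A2) + 2*(P+1)) with hc2def
    have hc1pos : 0 < c1 := by rw [hc1def]; nlinarith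
    have hc2pos : 0 < c2 := by rw [hc2def]; nlinarith [mul_pos hA1pos hA2pos]
    filter_upwards [eventually_ge_atTop (max (3*c1/ε) (max (3*c2/ε) 3)),
      Real.tendsto_log_atTop.eventually (eventually_ge_atTop (max (3*D/ε) 1))] with t htm hlogm
    have ht3 : (3:ℝ) ≤ t := le_trans (le_trans (le_max_right _ _) (le_max_right _ _)) htm
    have htc1 : 3*c1/ε ≤ t := le_trans (le_max_left _ _) htm
    have htc2 : 3*c2/ε ≤ t := le_trans (le_trans (le_max_left _ _) (le_max_right _ _)) htm
    have hlog1 : 1 ≤ Real.log t := le_trans (le_max_right _ _) hlogm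
    have hlogD : 3*D/ε ≤ Real.log t := le_trans (le_max_left _ _) hlogm
    have ht0 : (0:ℝ) < t := by linarith
    have hnuA1 : 1 ≤ nuA M t := le_trans hlog1 (Stmt3Aux.log_le_nuA h (le_of_lt ht0))
    have hnuAD : 3*D/ε ≤ nuA M t := le_trans hlogD (Stmt3Aux.log_le_nuA h (le_of_lt ht0))
    have hb1 : ν (2*t+2) ≤ nuA M (2*t+3) := by
      have := hνub (2*t+2) (by linarith)
      have he : 2*t+2+1 = 2*t+3 := by ring
      rw [he] at this
      exact this
    have hb2 : nuA M (2*t+3) ≤ nuA M (2*(2*t)) := Stmt3Aux.nuA_mono h (by linarith) (by linarith)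
    have hb3 : nuA M (2*(2*t)) ≤ A1 * nuA M (2*t) + A2 := hdoub (2*t) (by linarith)
    have hb4 : nuA M (2*t) ≤ A1 * nuA M t + A2 := hdoub t (by linarith)
    have hb5 : ν (2*t+2) ≤ A1^2 * nuA M t + A1*A2 + A2 := by
      have e := mul_le_mul_of_nonneg_left hb4 (le_of_lt hA1pos)
      have e2 : A1*(A1*nuA M t + A2) = A1^2*nuA M t + A1*A2 := by ring
      linarith
    have hνt0 : 0 ≤ ν (2*t+2) := hνnonneg _ (by linarith)
    have key : n * (2 * ν (2*t+2) + 2*(P+1)) ≤ c1 * nuA M t + c2 := by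
      have e0 : 2*ν (2*t+2) + 2*(P+1) ≤ 2*(A1^2*nuA M t + A1*A2+A2) + 2*(P+1) := by linarith
      have e1 := mul_le_mul_of_nonneg_left e0 (show (0:ℝ) ≤ n by linarith)
      calc n*(2*ν (2*t+2)+2*(P+1)) ≤ n*(2*(A1^2*nuA M t + A1*A2+A2)+2*(P+1)) := e1
        _ = c1*nuA M t + c2 := by rw [hc1def, hc2def]; ring
    have hη1 : η t ≤ D + (c1 * nuA M t + c2)/t := by
      rw [hηval t (by linarith)]
      have := div_le_div_of_nonneg_right key (le_of_lt ht0)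
      linarith
    have h3c1 : 3*c1 ≤ ε*t := by rw [div_le_iff₀ hε] at htc1; linarith
    have h3c2 : 3*c2 ≤ ε*t := by rw [div_le_iff₀ hε] at htc2; linarith
    have h3D : 3*D ≤ ε*nuA M t := by rw [div_le_iff₀ hε] at hnuAD; linarith
    have hnuA0 : (0:ℝ) ≤ nuA M t := by linarith
    have hdiv : (c1 * nuA M t + c2)/t ≤ (2*ε/3) * nuA M t := by
      rw [div_le_iff₀ ht0]
      have e1 : c1 * nuA M t ≤ (ε*t/3) * nuA M t :=
        mul_le_mul_of_nonneg_right (by linarith) hnuA0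
      have e2 : c2 ≤ ε*t/3 := by linarith
      have e3 : ε*t/3 ≤ (ε*t/3) * nuA M t :=
        le_mul_of_one_le_right (by nlinarith) hnuA1
      have e4 : (ε*t/3)*nuA M t + (ε*t/3)*nuA M t = 2*ε/3*nuA M t*t := by ring
      linarith
    have hs : D + (c1 * nuA M t + c2)/t ≤ ε * nuA M t := by linarith only [hdiv, h3D]
    have : η t ≤ ε * nuA M t := le_trans hη1 hs
    refine le_trans this ?_
    exact mul_le_mul_of_nonneg_left (hνlb t (le_of_lt ht0)) (le_of_lt hε)

  · -- main estimate
    have hQle : ∀ s : ℝ, 1 ≤ s → n * (2 * ν (2*s+2) + 2*(P+1)) / s ≤ η s := by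
      intro s hs
      rw [hηval s hs]
      linarith
    have hηpos : ∀ s : ℝ, 0 ≤ s → 0 < η s := fun s hs => lt_of_lt_of_le hDpos (hηD s hs)
    -- keyA : increase to the right
    have keyA : ∀ s1 s2 : ℝ, 0 ≤ s2 → s2 ≤ s1 →
        ν s1 - ν s2 ≤ η s2 * (1+(s1-s2))^(N+2) := by
      intro s1 s2 hs2 hs12
      have hs1 : 0 ≤ s1 := le_trans hs2 hs12
      set u : ℝ := s1 - s2 with hu
      have hu0 : 0 ≤ u := by rw [hu]; linarith
      have hu1 : (1:ℝ) ≤ 1 + u := by linarith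
      have hupow : (1+u)^(N+1) ≤ (1+u)^(N+2) := pow_le_pow_right₀ hu1 (by omega)
      have hνs2 : 0 ≤ ν s2 := hνnonneg s2 hs2
      have hνup : ν s1 ≤ nuA M (s1+1) := hνub s1 hs1
      rcases le_or_gt s2 1 with hcs | hcs
      · -- s2 ≤ 1
        have h2 : nuA M (s1+1) ≤ nuA M 1 + (Stmt3Aux.lam M (s1+1) : ℝ) * Real.log ((s1+1)/1) :=
          Stmt3Aux.inc h le_rfl (by linarith)
        rw [Stmt3Aux.nuA_one h, div_one, zero_add] at h2
        have hlog1 : Real.log (s1+1) ≤ s1+1 := by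
          have := Real.log_le_sub_one_of_pos (show (0:ℝ) < s1+1 by linarith)
          linarith
        have hlog0 : 0 ≤ Real.log (s1+1) := Real.log_nonneg (by linarith)
        have hlam : (Stmt3Aux.lam M (s1+1) : ℝ) ≤ P * n^2 * (s1+1)^N := by
          have := Stmt3Aux.lam_poly h hp₀ hN hstar' (show (1:ℝ) ≤ s1+1 by linarith)
          rw [hPdef, hndef]; exact this
        have hs1u : s1 + 1 ≤ 2*(1+u) := by rw [hu]; linarith
        have hPn2 : (0:ℝ) ≤ P*n^2 := by nlinarith [sq_nonneg n]
        have hp2 : (s1+1)^(N+1) ≤ (2*(1+u))^(N+1) := pow_le_pow_left₀ (by linarith) hs1u (N+1)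
        have step1 : ν s1 - ν s2 ≤ (Stmt3Aux.lam M (s1+1) : ℝ) * Real.log (s1+1) := by
          linarith
        have step2 : (Stmt3Aux.lam M (s1+1) : ℝ) * Real.log (s1+1) ≤
            (P * n^2 * (s1+1)^N) * (s1+1) :=
          mul_le_mul hlam hlog1 hlog0 (by nlinarith [pow_nonneg (show (0:ℝ) ≤ s1+1 by linarith) N])
        have step3 : (P * n^2 * (s1+1)^N) * (s1+1) = P*n^2*(s1+1)^(N+1) := by
          rw [pow_succ]; ring
        have step4 : P*n^2*(s1+1)^(N+1) ≤ P*n^2*(2*(1+u))^(N+1) :=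
          mul_le_mul_of_nonneg_left hp2 hPn2
        have step5 : P*n^2*(2*(1+u))^(N+1) = D * (1+u)^(N+1) := by
          rw [hDdef, mul_pow]; ring
        have step6 : D * (1+u)^(N+1) ≤ D * (1+u)^(N+2) :=
          mul_le_mul_of_nonneg_left hupow (le_of_lt hDpos)
        have step7 : D * (1+u)^(N+2) ≤ η s2 * (1+u)^(N+2) :=
          mul_le_mul_of_nonneg_right (hηD s2 hs2) (pow_nonneg (by linarith) _)
        have base : ν s1 - ν s2 ≤ D * (1+u)^(N+2) := by linarith
        exact le_trans base step7
      · -- 1 < s2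
        have hs2' : (1:ℝ) ≤ s2 := le_of_lt hcs
        have hs20 : (0:ℝ) < s2 := by linarith
        have hνlow : nuA M s2 ≤ ν s2 := hνlb s2 hs2
        have h2 : nuA M (s1+1) ≤ nuA M s2
            + (Stmt3Aux.lam M (s1+1) : ℝ) * Real.log ((s1+1)/s2) :=
          Stmt3Aux.inc h hs2' (by linarith)
        have hdrop : ν s1 - ν s2 ≤ (Stmt3Aux.lam M (s1+1):ℝ) * Real.log ((s1+1)/s2) := by
          linarith
        have hlogle : Real.log ((s1+1)/s2) ≤ (1+u)/s2 := by
          have hpos : (0:ℝ) < (s1+1)/s2 := div_pos (by linarith) hs20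
          have h3 := Real.log_le_sub_one_of_pos hpos
          have he : (s1+1)/s2 - 1 = (1+u)/s2 := by
            rw [hu]; field_simp; ring
          linarith [he ▸ h3]
        have hlog0 : 0 ≤ Real.log ((s1+1)/s2) :=
          Real.log_nonneg ((one_le_div hs20).mpr (by linarith))
        set k' : ℕ := ⌈Real.logb 2 (1+u)⌉₊ with hk'
        have h2k : 1+u ≤ (2:ℝ)^k' := Stmt3Aux.two_pow_ceil_ge hu1
        have hle : s1+1 ≤ (2:ℝ)^k' * (s2+1) := by
          have e1 : s1+1 ≤ (s2+1)*(1+u) := by nlinarith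
          have e2 : (s2+1)*(1+u) ≤ (s2+1)*((2:ℝ)^k') :=
            mul_le_mul_of_nonneg_left h2k (by linarith)
          linarith [e2.trans_eq (mul_comm _ _)]
        have hlam1 : Stmt3Aux.lam M (s1+1) ≤ Stmt3Aux.lam M ((2:ℝ)^k' * (s2+1)) :=
          Stmt3Aux.lam_mono h (by linarith) hle
        have hlam2 : Stmt3Aux.lam M ((2:ℝ)^k' * (s2+1))
            ≤ N^k' * (Stmt3Aux.lam M (s2+1) + (p₀+1)*k') :=
          Stmt3Aux.lam_iter h hp₀ hN hstar' (by linarith) k'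
        have hlamR : (Stmt3Aux.lam M (s1+1) : ℝ)
            ≤ n^k' * ((Stmt3Aux.lam M (s2+1) : ℝ) + (P+1)*(k':ℝ)) := by
          rw [hndef, hPdef]
          have : (Stmt3Aux.lam M (s1+1) : ℝ)
              ≤ ((N^k' * (Stmt3Aux.lam M (s2+1) + (p₀+1)*k') : ℕ) : ℝ) := by
            exact_mod_cast le_trans hlam1 hlam2
          push_cast at this
          linarith
        have hNk : (n:ℝ)^k' ≤ n*(1+u)^N := by
          rw [hndef]
          exact Stmt3Aux.Npow_ceil_le hN hu1
        have hk2 : (k':ℝ) ≤ 2*(1+u) := Stmt3Aux.ceil_logb_le hu1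
        have hlamtwo : (Stmt3Aux.lam M (s2+1) : ℝ) ≤ 2*ν (2*s2+2) := by
          have e1 := Stmt3Aux.lam_le_two_nuA h (show (1:ℝ) ≤ s2+1 by linarith)
          have e2 : 2*(s2+1) = 2*s2+2 := by ring
          rw [e2] at e1
          exact le_trans e1 (by linarith [hνlb (2*s2+2) (by linarith)])
        have hν20 : 0 ≤ ν (2*s2+2) := hνnonneg _ (by linarith)
        have hinner : (Stmt3Aux.lam M (s2+1) : ℝ) + (P+1)*(k':ℝ)
            ≤ (2*ν (2*s2+2) + 2*(P+1)) * (1+u) := by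
          have e1 : (P+1)*(k':ℝ) ≤ (P+1)*(2*(1+u)) :=
            mul_le_mul_of_nonneg_left hk2 (by linarith)
          nlinarith
        have hinner0 : (0:ℝ) ≤ (Stmt3Aux.lam M (s2+1) : ℝ) + (P+1)*(k':ℝ) := by
          have c1 : (0:ℝ) ≤ (Stmt3Aux.lam M (s2+1) : ℝ) := Nat.cast_nonneg _
          have c2 : (0:ℝ) ≤ (k':ℝ) := Nat.cast_nonneg _
          have c3 : (0:ℝ) ≤ (P+1)*(k':ℝ) := mul_nonneg (by linarith) c2
          linarith
        have hXfinal : (Stmt3Aux.lam M (s1+1) : ℝ)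
            ≤ n * (2*ν (2*s2+2) + 2*(P+1)) * (1+u)^(N+1) := by
          have e1 : (Stmt3Aux.lam M (s1+1) : ℝ)
              ≤ (n*(1+u)^N) * ((2*ν (2*s2+2) + 2*(P+1)) * (1+u)) := by
            refine le_trans hlamR ?_
            exact mul_le_mul hNk hinner hinner0
              (by positivity)
          refine le_trans e1 (le_of_eq ?_)
          rw [pow_succ]
          ring
        have hν21 : (0:ℝ) ≤ n * (2*ν (2*s2+2) + 2*(P+1)) * (1+u)^(N+1) := by
          have : (0:ℝ) ≤ (1+u)^(N+1) := pow_nonneg (by linarith) _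
          nlinarith
        have hmain : ν s1 - ν s2 ≤
            (n * (2*ν (2*s2+2) + 2*(P+1)) * (1+u)^(N+1)) * ((1+u)/s2) := by
          refine le_trans hdrop ?_
          exact mul_le_mul hXfinal hlogle hlog0 hν21
        have heq : (n * (2*ν (2*s2+2) + 2*(P+1)) * (1+u)^(N+1)) * ((1+u)/s2)
            = (n * (2*ν (2*s2+2) + 2*(P+1)) / s2) * (1+u)^(N+2) := by
          rw [pow_succ]
          field_simp
          ring
        have hfin : (n * (2*ν (2*s2+2) + 2*(P+1)) / s2) * (1+u)^(N+2)
            ≤ η s2 * (1+u)^(N+2) :=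
          mul_le_mul_of_nonneg_right (hQle s2 hs2') (pow_nonneg (by linarith) _)
        calc ν s1 - ν s2
            ≤ (n * (2*ν (2*s2+2) + 2*(P+1)) * (1+u)^(N+1)) * ((1+u)/s2) := hmain
          _ = (n * (2*ν (2*s2+2) + 2*(P+1)) / s2) * (1+u)^(N+2) := heq
          _ ≤ η s2 * (1+u)^(N+2) := hfin
    -- keyB : decrease to the left, with η evaluated at the larger point
    have keyB : ∀ s1 s2 : ℝ, 0 ≤ s1 → s1 ≤ s2 →
        ν s2 - ν s1 ≤ η s2 * (1+(s2-s1))^(N+2) := by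
      intro s1 s2 hs1 hs12
      have hs2 : 0 ≤ s2 := le_trans hs1 hs12
      set u : ℝ := s2 - s1 with hu
      have hu0 : 0 ≤ u := by rw [hu]; linarith
      have hu1 : (1:ℝ) ≤ 1 + u := by linarith
      have hpw1 : (1:ℝ) ≤ (1+u)^(N+2) := one_le_pow₀ hu1
      have hνs1 : 0 ≤ ν s1 := hνnonneg s1 hs1
      have hνup : ν s2 ≤ nuA M (s2+1) := hνub s2 hs2
      rcases le_or_gt s2 1 with hcs | hcs
      · -- s2 ≤ 1 : everything is bounded by a constant
        have h2 : nuA M (s2+1) ≤ nuA M 2 := Stmt3Aux.nuA_mono h (by linarith) (by linarith)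
        have h3 : nuA M 2 ≤ nuA M 1 + (Stmt3Aux.lam M 2 : ℝ) * Real.log (2/1) :=
          Stmt3Aux.inc h le_rfl one_le_two
        rw [Stmt3Aux.nuA_one h, zero_add] at h3
        have hlog2 : Real.log ((2:ℝ)/1) ≤ 1 := by
          rw [div_one]
          have := Real.log_two_lt_d9
          linarith
        have hlog2' : 0 ≤ Real.log ((2:ℝ)/1) := by
          rw [div_one]; exact Real.log_nonneg one_le_two
        have hlam2 : (Stmt3Aux.lam M 2 : ℝ) ≤ P*n^2*2^N := by
          have := Stmt3Aux.lam_poly h hp₀ hN hstar' (show (1:ℝ) ≤ 2 by norm_num)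
          rw [hPdef, hndef]
          exact_mod_cast this
        have hlam20 : (0:ℝ) ≤ (Stmt3Aux.lam M 2 : ℝ) := Nat.cast_nonneg _
        have hstep : (Stmt3Aux.lam M 2 : ℝ) * Real.log (2/1) ≤ P*n^2*2^N := by
          nlinarith
        have hD2 : P*n^2*2^N ≤ D := by
          rw [hDdef]
          have hPn2 : (0:ℝ) ≤ P*n^2 := by nlinarith [sq_nonneg n]
          have e : P*n^2*2^(N+1) - P*n^2*2^N = P*n^2*2^N := by rw [pow_succ]; ring
          have e2 : (0:ℝ) ≤ P*n^2*2^N :=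
            mul_nonneg hPn2 (pow_nonneg (show (0:ℝ) ≤ 2 by norm_num) N)
          linarith
        have hfd : D ≤ η s2 * (1+u)^(N+2) := by
          have e1 : D ≤ η s2 := hηD s2 hs2
          have e2 : η s2 ≤ η s2 * (1+u)^(N+2) :=
            le_mul_of_one_le_right (le_of_lt (hηpos s2 hs2)) hpw1
          linarith
        have base : ν s2 - ν s1 ≤ D := by linarith
        exact le_trans base hfd
      · -- 1 < s2
        have hs2' : (1:ℝ) ≤ s2 := le_of_lt hcs
        have hs20 : (0:ℝ) < s2 := by linarith
        set a : ℝ := max s1 1 with ha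
        have ha1 : (1:ℝ) ≤ a := le_max_right _ _
        have ha0 : (0:ℝ) < a := by linarith
        have hs1a : s1 ≤ a := le_max_left _ _
        have has2 : a ≤ s2+1 := max_le (by linarith) (by linarith)
        have hA : nuA M a ≤ ν s1 := by
          rcases le_total 1 s1 with h'|h'
          · rw [ha, max_eq_left h']
            exact hνlb s1 hs1
          · rw [ha, max_eq_right h', Stmt3Aux.nuA_one h]
            exact hνs1
        have h2 : nuA M (s2+1) ≤ nuA M a
            + (Stmt3Aux.lam M (s2+1) : ℝ) * Real.log ((s2+1)/a) :=
          Stmt3Aux.inc h ha1 has2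
        have hdrop : ν s2 - ν s1 ≤ (Stmt3Aux.lam M (s2+1):ℝ) * Real.log ((s2+1)/a) := by
          linarith
        have hlog0 : 0 ≤ Real.log ((s2+1)/a) :=
          Real.log_nonneg ((one_le_div ha0).mpr has2)
        have ha_u : s2 ≤ a*(1+u) := by
          rcases le_total 1 s1 with h'|h'
          · rw [ha, max_eq_left h', hu]
            nlinarith [mul_nonneg (sub_nonneg.mpr h') (sub_nonneg.mpr hs12)]
          · rw [ha, max_eq_right h', hu]
            linarith
        have hlogle : Real.log ((s2+1)/a) ≤ (1+u)^2/s2 := by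
          have hpos : (0:ℝ) < (s2+1)/a := div_pos (by linarith) ha0
          have h3 := Real.log_le_sub_one_of_pos hpos
          have he : (s2+1)/a - 1 = (s2+1-a)/a := by field_simp
          have h4 : (s2+1-a)/a ≤ (1+u)^2/s2 := by
            rw [div_le_div_iff₀ ha0 hs20]
            have e1 : s2+1-a ≤ 1+u := by rw [hu]; linarith
            have e2 : (s2+1-a)*s2 ≤ (1+u)*s2 :=
              mul_le_mul_of_nonneg_right e1 (le_of_lt hs20)
            have e3 : (1+u)*s2 ≤ (1+u)*(a*(1+u)) :=
              mul_le_mul_of_nonneg_left ha_u (by linarith)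
            nlinarith
          linarith [he ▸ h3]
        have hlamtwo : (Stmt3Aux.lam M (s2+1) : ℝ) ≤ 2*ν (2*s2+2) := by
          have e1 := Stmt3Aux.lam_le_two_nuA h (show (1:ℝ) ≤ s2+1 by linarith)
          have e2 : 2*(s2+1) = 2*s2+2 := by ring
          rw [e2] at e1
          exact le_trans e1 (by linarith [hνlb (2*s2+2) (by linarith)])
        have hν20 : 0 ≤ ν (2*s2+2) := hνnonneg _ (by linarith)
        have hmain : ν s2 - ν s1 ≤ (2*ν (2*s2+2)) * ((1+u)^2/s2) := by
          refine le_trans hdrop ?_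
          exact mul_le_mul hlamtwo hlogle hlog0 (by linarith)
        have hstep2 : (2*ν (2*s2+2)) * ((1+u)^2/s2)
            ≤ (n * (2*ν (2*s2+2) + 2*(P+1)) / s2) * (1+u)^2 := by
          have e1 : 2*ν (2*s2+2) ≤ n * (2*ν (2*s2+2) + 2*(P+1)) := by nlinarith
          have e2 : (0:ℝ) ≤ (1+u)^2/s2 := by positivity
          have e3 := mul_le_mul_of_nonneg_right e1 e2
          calc (2*ν (2*s2+2)) * ((1+u)^2/s2)
              ≤ (n * (2*ν (2*s2+2) + 2*(P+1))) * ((1+u)^2/s2) := e3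
            _ = (n * (2*ν (2*s2+2) + 2*(P+1)) / s2) * (1+u)^2 := by
                field_simp
        have hstep3 : (n * (2*ν (2*s2+2) + 2*(P+1)) / s2) * (1+u)^2
            ≤ η s2 * (1+u)^2 :=
          mul_le_mul_of_nonneg_right (hQle s2 hs2') (by positivity)
        have hstep4 : η s2 * (1+u)^2 ≤ η s2 * (1+u)^(N+2) :=
          mul_le_mul_of_nonneg_left (pow_le_pow_right₀ hu1 (by omega))
            (le_of_lt (hηpos s2 hs2))
        calc ν s2 - ν s1 ≤ (2*ν (2*s2+2)) * ((1+u)^2/s2) := hmain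
          _ ≤ (n * (2*ν (2*s2+2) + 2*(P+1)) / s2) * (1+u)^2 := hstep2
          _ ≤ η s2 * (1+u)^2 := hstep3
          _ ≤ η s2 * (1+u)^(N+2) := hstep4
    intro t1 t2 ht1 ht2
    rcases le_total t2 t1 with hc | hc
    · rw [abs_of_nonneg (sub_nonneg.mpr (hνmono hc)), abs_of_nonneg (sub_nonneg.mpr hc)]
      exact keyA t1 t2 ht2 hc
    · rw [abs_sub_comm, abs_of_nonneg (sub_nonneg.mpr (hνmono hc)), abs_sub_comm t1 t2,
        abs_of_nonneg (sub_nonneg.mpr hc)]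
      exact keyB t1 t2 ht1 hc
end
end

section
/- Let M be a weight sequence satisfying (M.2) and (M.2)*. For every r ∈ 𝔕 there exists r' ∈ 𝔕 with r'_j ≤ r_j for all j such that the sequence N = (N_p)_{p∈ℕ} with N_p = M_p / ∏_{j=0}^p r'_j is again a weight sequence satisfying (M.2) and (M.2)*. -/
open Filter MeasureTheory
open scoped BigOperators

noncomputable section

-- aux


def mr (M : ℕ → ℝ) (p : ℕ) : ℝ := M p / M (p - 1)

def rp (M r : ℕ → ℝ) (K : ℕ) : ℕ → ℝ
  | 0 => 1
  | 1 => 1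
  | p + 2 =>
    min (min (r (p+2)) (Real.sqrt (mr M (p+2))))
        (min (rp M r K (p+1) * (mr M (p+2) / mr M (p+1)))
             (2 * rp M r K ((p+2) / max K 2)))
  decreasing_by
  · omega
  · exact Nat.div_lt_self (by omega) (by omega)

section
variable {M r : ℕ → ℝ} {K : ℕ}

lemma mr_pos (hMpos : ∀ p, 0 < M p) (p : ℕ) : 0 < mr M p :=
  div_pos (hMpos p) (hMpos _)
lemma mr_zero (hMpos : ∀ p, 0 < M p) : mr M 0 = 1 := by
  simp [mr, div_self (hMpos 0).ne']
lemma mr_one (hM0 : M 0 = 1) (hM1 : M 1 = 1) : mr M 1 = 1 := by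
  simp [mr, hM0, hM1]
lemma mr_mono (hMpos : ∀ p, 0 < M p) (hM0 : M 0 = 1) (hM1 : M 1 = 1)
    (hlc : ∀ p : ℕ, 1 ≤ p → (M p)^2 ≤ M (p-1) * M (p+1)) :
    Monotone (mr M) := by
  apply monotone_nat_of_le_succ
  intro p
  rcases Nat.eq_zero_or_pos p with h | h
  · subst h; rw [mr_zero hMpos, mr_one hM0 hM1]
  · have h1 := hlc p h
    show M p / M (p-1) ≤ M (p+1) / M (p+1-1)
    have : p + 1 - 1 = p := rfl
    rw [this, div_le_div_iff₀ (hMpos _) (hMpos _)]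
    nlinarith [hMpos p, hMpos (p-1), hMpos (p+1)]
lemma mr_ge_one (hMpos : ∀ p, 0 < M p) (hM0 : M 0 = 1) (hM1 : M 1 = 1)
    (hlc : ∀ p : ℕ, 1 ≤ p → (M p)^2 ≤ M (p-1) * M (p+1)) (p : ℕ) :
    1 ≤ mr M p := by
  have := mr_mono hMpos hM0 hM1 hlc (Nat.zero_le p)
  rwa [mr_zero hMpos] at this

lemma rp_zero : rp M r K 0 = 1 := by simp [rp]
lemma rp_one : rp M r K 1 = 1 := by simp [rp]
lemma rp_eq (p : ℕ) : rp M r K (p+2) =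
    min (min (r (p+2)) (Real.sqrt (mr M (p+2))))
        (min (rp M r K (p+1) * (mr M (p+2) / mr M (p+1)))
             (2 * rp M r K ((p+2) / max K 2))) := by
  rw [rp]

lemma rp_le_r (hr0 : r 0 = 1) (hr1 : r 1 = 1) (p : ℕ) : rp M r K p ≤ r p := by
  match p with
  | 0 => rw [rp_zero, hr0]
  | 1 => rw [rp_one, hr1]
  | q + 2 => rw [rp_eq]; exact (min_le_left _ _).trans (min_le_left _ _)

lemma rp_le_sqrt (hMpos : ∀ p, 0 < M p) (hM0 : M 0 = 1) (hM1 : M 1 = 1) (p : ℕ) :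
    rp M r K p ≤ Real.sqrt (mr M p) := by
  match p with
  | 0 => rw [rp_zero, mr_zero hMpos, Real.sqrt_one]
  | 1 => rw [rp_one, mr_one hM0 hM1, Real.sqrt_one]
  | q + 2 => rw [rp_eq]; exact (min_le_left _ _).trans (min_le_right _ _)

lemma rp_ratio (p : ℕ) :
    rp M r K (p+2) ≤ rp M r K (p+1) * (mr M (p+2) / mr M (p+1)) := by
  rw [rp_eq]; exact (min_le_right _ _).trans (min_le_left _ _)

lemma rp_cap (hK : 4 ≤ K) (p : ℕ) (hp : 2 ≤ p) :
    rp M r K p ≤ 2 * rp M r K (p / K) := by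
  obtain ⟨q, rfl⟩ : ∃ q, p = q + 2 := ⟨p - 2, by omega⟩
  rw [rp_eq, Nat.max_eq_left (by omega : 2 ≤ K)]
  exact (min_le_right _ _).trans (min_le_right _ _)

lemma rp_mono (hMpos : ∀ p, 0 < M p) (hM0 : M 0 = 1) (hM1 : M 1 = 1)
    (hlc : ∀ p : ℕ, 1 ≤ p → (M p)^2 ≤ M (p-1) * M (p+1))
    (hr0 : r 0 = 1) (hr1 : r 1 = 1) (hrmono : Monotone r) (hK : 4 ≤ K) :
    Monotone (rp M r K) := by
  have key : ∀ p : ℕ, ∀ i ≤ p, rp M r K i ≤ rp M r K p := by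
    intro p
    induction p using Nat.strong_induction_on with
    | _ p ih =>
      intro i hi
      rcases eq_or_lt_of_le hi with rfl | hlt
      · exact le_rfl
      obtain ⟨q, rfl⟩ : ∃ q, p = q + 1 := ⟨p - 1, by omega⟩
      refine (ih q (by omega) i (by omega)).trans ?_
      match q with
      | 0 => rw [rp_zero, rp_one]
      | Nat.succ q' =>
        have hone : (1:ℝ) ≤ rp M r K (q'+1) := by
          have := ih (q'+1) (by omega) 0 (by omega)
          rwa [rp_zero] at this
        rw [rp_eq]
        refine le_min (le_min ?_ ?_) (le_min ?_ ?_)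
        · exact (rp_le_r hr0 hr1 _).trans (hrmono (by omega))
        · exact (rp_le_sqrt hMpos hM0 hM1 _).trans
            (Real.sqrt_le_sqrt (mr_mono hMpos hM0 hM1 hlc (by omega)))
        · refine le_mul_of_one_le_right (by linarith) ?_
          exact (one_le_div (mr_pos hMpos _)).2 (mr_mono hMpos hM0 hM1 hlc (by omega))
        · rw [Nat.max_eq_left (by omega : 2 ≤ K)]
          rcases Nat.eq_zero_or_pos q' with rfl | hq'
          · have : (0+2) / K = 0 := Nat.div_eq_of_lt (by omega)
            rw [this, rp_one, rp_zero]; norm_num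
          · refine (rp_cap hK (q'+1) (by omega)).trans ?_
            have h2 : (q'+2) / K < q' + 2 := Nat.div_lt_self (by omega) (by omega)
            have h3 : (q'+1) / K ≤ (q'+2) / K := Nat.div_le_div_right (by omega)
            have := ih ((q'+2)/K) h2 ((q'+1)/K) h3
            linarith
  intro a b hab; exact key b a hab

lemma rp_ge_one (hMpos : ∀ p, 0 < M p) (hM0 : M 0 = 1) (hM1 : M 1 = 1)
    (hlc : ∀ p : ℕ, 1 ≤ p → (M p)^2 ≤ M (p-1) * M (p+1))
    (hr0 : r 0 = 1) (hr1 : r 1 = 1) (hrmono : Monotone r) (hK : 4 ≤ K) (p : ℕ) :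
    1 ≤ rp M r K p := by
  have := rp_mono hMpos hM0 hM1 hlc hr0 hr1 hrmono hK (Nat.zero_le p)
  rwa [rp_zero] at this


lemma prod_mr (hMpos : ∀ p, 0 < M p) (hM0 : M 0 = 1) (p : ℕ) :
    ∏ j ∈ Finset.range p, mr M (j+1) = M p := by
  induction p with
  | zero => simp [hM0]
  | succ n ih =>
    rw [Finset.prod_range_succ, ih, mr]
    simp only [Nat.add_sub_cancel]
    rw [mul_div_cancel₀ _ (hMpos n).ne']

lemma mr_tendsto (hMpos : ∀ p, 0 < M p) (hM0 : M 0 = 1) (hM1 : M 1 = 1)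
    (hlc : ∀ p : ℕ, 1 ≤ p → (M p)^2 ≤ M (p-1) * M (p+1))
    (hMtend : Tendsto (fun p : ℕ => (M p) ^ ((p : ℝ)⁻¹)) atTop atTop) :
    Tendsto (mr M) atTop atTop := by
  have hmono := mr_mono hMpos hM0 hM1 hlc
  apply tendsto_atTop_mono' atTop _ hMtend
  filter_upwards [eventually_ge_atTop 1] with p hp
  have h1 : M p ≤ (mr M p) ^ p := by
    calc M p = ∏ j ∈ Finset.range p, mr M (j+1) := (prod_mr hMpos hM0 p).symm
    _ ≤ ∏ j ∈ Finset.range p, mr M p := by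
        refine Finset.prod_le_prod (fun j _ => (mr_pos hMpos _).le) ?_
        intro j hj
        exact hmono (by simpa using Nat.succ_le_of_lt (Finset.mem_range.mp hj))
    _ = (mr M p) ^ p := by rw [Finset.prod_const, Finset.card_range]
  have h2 : (M p) ^ ((p:ℝ)⁻¹) ≤ ((mr M p) ^ p) ^ ((p:ℝ)⁻¹) :=
    Real.rpow_le_rpow (hMpos p).le h1 (by positivity)
  refine h2.trans_eq ?_
  rw [← Real.rpow_natCast (mr M p) p, ← Real.rpow_mul (mr_pos hMpos p).le,
    mul_inv_cancel₀ (by positivity : (p:ℝ) ≠ 0), Real.rpow_one]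

lemma sqrt_tendsto_atTop : Tendsto Real.sqrt atTop atTop := by
  rw [tendsto_atTop_atTop]
  intro b
  refine ⟨b^2, fun a ha => ?_⟩
  calc b ≤ |b| := le_abs_self b
  _ = Real.sqrt (b^2) := (Real.sqrt_sq_eq_abs b).symm
  _ ≤ Real.sqrt a := Real.sqrt_le_sqrt ha

lemma rp_unbounded (hMpos : ∀ p, 0 < M p) (hM0 : M 0 = 1) (hM1 : M 1 = 1)
    (hlc : ∀ p : ℕ, 1 ≤ p → (M p)^2 ≤ M (p-1) * M (p+1))
    (hMtend : Tendsto (fun p : ℕ => (M p) ^ ((p : ℝ)⁻¹)) atTop atTop)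
    (hr0 : r 0 = 1) (hr1 : r 1 = 1) (hrmono : Monotone r)
    (hrtend : Tendsto r atTop atTop) (hK : 4 ≤ K) :
    ¬ BddAbove (Set.range (rp M r K)) := by
  intro hbdd
  have hmono := rp_mono hMpos hM0 hM1 hlc hr0 hr1 hrmono hK
  have hmrt := mr_tendsto hMpos hM0 hM1 hlc hMtend
  set L := sSup (Set.range (rp M r K)) with hL
  have hle : ∀ p, rp M r K p ≤ L := fun p => le_csSup hbdd ⟨p, rfl⟩
  have hL1 : (1:ℝ) ≤ L := by
    have h := hle 0; rw [rp_zero] at h; exact h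
  -- pick q₀ with rp q₀ > 2L/3
  obtain ⟨x, ⟨q₀, rfl⟩, hq₀⟩ := exists_lt_of_lt_csSup
    (Set.range_nonempty _) (show 2*L/3 < L by linarith)
  -- pick thresholds
  obtain ⟨Pr, hPr⟩ := (tendsto_atTop_atTop.mp hrtend) (L+1)
  obtain ⟨Ps, hPs⟩ := (tendsto_atTop_atTop.mp (sqrt_tendsto_atTop.comp hmrt)) (L+1)
  set P : ℕ := max (max Pr Ps) (max (K*q₀ + K) 2) with hP
  -- for every p ≥ P, the recursion picks the ratio branch
  have key : ∀ p, P ≤ p → rp M r K (p+1) = rp M r K p * (mr M (p+1) / mr M (p+1-1)) := by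
    intro p hp
    have hPPr : Pr ≤ P := le_max_of_le_left (le_max_left _ _)
    have hPPs : Ps ≤ P := le_max_of_le_left (le_max_right _ _)
    have hPq : K*q₀ + K ≤ P := le_max_of_le_right (le_max_left _ _)
    have hP2 : 2 ≤ P := le_max_of_le_right (le_max_right _ _)
    have hp2 : 2 ≤ p := le_trans hP2 hp
    obtain ⟨q, rfl⟩ : ∃ q, p = q + 1 := ⟨p - 1, by omega⟩
    have hval := rp_eq (M := M) (r := r) (K := K) q
    rw [Nat.max_eq_left (by omega : 2 ≤ K)] at hval
    have hlt_a : rp M r K (q+2) < r (q+2) := by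
      have : L + 1 ≤ r (q+2) := hPr _ (by omega)
      have := hle (q+2); linarith
    have hlt_b : rp M r K (q+2) < Real.sqrt (mr M (q+2)) := by
      have : L + 1 ≤ Real.sqrt (mr M (q+2)) := hPs _ (by omega)
      have := hle (q+2); linarith
    have hlt_d : rp M r K (q+2) < 2 * rp M r K ((q+2) / K) := by
      have hq0le : q₀ ≤ (q+2) / K := by
        have hcm : K * q₀ = q₀ * K := Nat.mul_comm _ _
        exact (Nat.le_div_iff_mul_le (by omega)).2 (by omega)
      have h1 : rp M r K q₀ ≤ rp M r K ((q+2)/K) := hmono hq0le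
      have := hle (q+2)
      nlinarith
    -- conclude min equals ratio term
    rcases min_choice (min (r (q+2)) (Real.sqrt (mr M (q+2))))
      (min (rp M r K (q+1) * (mr M (q+2) / mr M (q+1))) (2 * rp M r K ((q+2) / K))) with h | h
    · exfalso
      rw [h] at hval
      rcases min_choice (r (q+2)) (Real.sqrt (mr M (q+2))) with h2 | h2 <;> rw [h2] at hval
      · exact absurd hval (by linarith)
      · exact absurd hval (by linarith)
    · rw [h] at hval
      rcases min_choice (rp M r K (q+1) * (mr M (q+2) / mr M (q+1)))
        (2 * rp M r K ((q+2) / K)) with h2 | h2 <;> rw [h2] at hval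
      · simpa using hval
      · exact absurd hval (by linarith)
  -- telescoping from P
  have tel : ∀ j : ℕ, rp M r K (P + j) = rp M r K P * (mr M (P+j) / mr M P) := by
    intro j
    induction j with
    | zero => rw [Nat.add_zero, div_self (mr_pos hMpos P).ne', mul_one]
    | succ n ih =>
      have := key (P + n) (by omega)
      rw [show P + (n+1) = (P+n) + 1 by omega, this, ih]
      have h1 : (P + n + 1 - 1) = P + n := by omega
      rw [h1]
      have e1 : mr M (P+n) ≠ 0 := (mr_pos hMpos _).ne'
      have e2 : mr M P ≠ 0 := (mr_pos hMpos _).ne'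
      field_simp
  -- contradiction with mr → ∞
  obtain ⟨Q, hQ⟩ := (tendsto_atTop_atTop.mp hmrt) ((L+1) * mr M P)
  set n := max Q P with hn
  have h1 : rp M r K n = rp M r K P * (mr M n / mr M P) := by
    have := tel (n - P)
    rwa [show P + (n - P) = n by omega] at this
  have h2 : (L+1) * mr M P ≤ mr M n := hQ n (le_max_left _ _)
  have h3 : 1 ≤ rp M r K P := rp_ge_one hMpos hM0 hM1 hlc hr0 hr1 hrmono hK P
  have h4 := hle n
  have h5 := mr_pos hMpos P
  have h6 : L + 1 ≤ mr M n / mr M P := (le_div_iff₀ h5).2 h2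
  nlinarith [mr_pos hMpos n]


def Pf (M r : ℕ → ℝ) (K : ℕ) (p : ℕ) : ℝ := ∏ j ∈ Finset.range (p+1), rp M r K j

lemma Pf_pos (hMpos : ∀ p, 0 < M p) (hM0 : M 0 = 1) (hM1 : M 1 = 1)
    (hlc : ∀ p : ℕ, 1 ≤ p → (M p)^2 ≤ M (p-1) * M (p+1))
    (hr0 : r 0 = 1) (hr1 : r 1 = 1) (hrmono : Monotone r) (hK : 4 ≤ K) (p : ℕ) :
    0 < Pf M r K p := by
  refine Finset.prod_pos fun j _ => ?_
  exact lt_of_lt_of_le one_pos (rp_ge_one hMpos hM0 hM1 hlc hr0 hr1 hrmono hK j)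

lemma Pf_succ (p : ℕ) : Pf M r K (p+1) = Pf M r K p * rp M r K (p+1) :=
  Finset.prod_range_succ _ _

lemma Pf_le_sqrt (hMpos : ∀ p, 0 < M p) (hM0 : M 0 = 1) (hM1 : M 1 = 1)
    (hlc : ∀ p : ℕ, 1 ≤ p → (M p)^2 ≤ M (p-1) * M (p+1))
    (hr0 : r 0 = 1) (hr1 : r 1 = 1) (hrmono : Monotone r) (hK : 4 ≤ K) (p : ℕ) :
    Pf M r K p ≤ Real.sqrt (M p) := by
  have hPpos := Pf_pos hMpos hM0 hM1 hlc hr0 hr1 hrmono hK p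
  rw [show Real.sqrt (M p) = Real.sqrt (M p) from rfl]
  rw [Real.le_sqrt hPpos.le (hMpos p).le]
  calc (Pf M r K p)^2 = ∏ j ∈ Finset.range (p+1), (rp M r K j)^2 := by
        rw [Pf, ← Finset.prod_pow]
  _ = (∏ j ∈ Finset.range p, (rp M r K (j+1))^2) * (rp M r K 0)^2 :=
        Finset.prod_range_succ' _ _
  _ ≤ ∏ j ∈ Finset.range p, mr M (j+1) := by
        rw [rp_zero]
        simp only [one_pow, mul_one]
        refine Finset.prod_le_prod (fun j _ => by positivity) fun j _ => ?_
        have h := rp_le_sqrt (r := r) (K := K) hMpos hM0 hM1 (j+1)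
        calc (rp M r K (j+1))^2 ≤ (Real.sqrt (mr M (j+1)))^2 := by
              have h1 : (0:ℝ) ≤ rp M r K (j+1) :=
                le_trans zero_le_one (rp_ge_one hMpos hM0 hM1 hlc hr0 hr1 hrmono hK (j+1))
              nlinarith [Real.sqrt_nonneg (mr M (j+1))]
        _ = mr M (j+1) := Real.sq_sqrt (mr_pos hMpos _).le
  _ = M p := prod_mr hMpos hM0 p

lemma Pf_submul (hMpos : ∀ p, 0 < M p) (hM0 : M 0 = 1) (hM1 : M 1 = 1)
    (hlc : ∀ p : ℕ, 1 ≤ p → (M p)^2 ≤ M (p-1) * M (p+1))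
    (hr0 : r 0 = 1) (hr1 : r 1 = 1) (hrmono : Monotone r) (hK : 4 ≤ K) (p q : ℕ) :
    Pf M r K p * Pf M r K q ≤ Pf M r K (p+q) := by
  have hmono := rp_mono hMpos hM0 hM1 hlc hr0 hr1 hrmono hK
  have h1 : Pf M r K (p+q) = Pf M r K p * ∏ j ∈ Finset.range q, rp M r K (p+1+j) := by
    rw [Pf, Pf, show p+q+1 = (p+1)+q by omega, Finset.prod_range_add]
  have h2 : Pf M r K q = ∏ j ∈ Finset.range q, rp M r K (j+1) := by
    rw [Pf, Finset.prod_range_succ', rp_zero, mul_one]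
  rw [h1, h2]
  refine mul_le_mul_of_nonneg_left (Finset.prod_le_prod (fun j _ => ?_) fun j _ => ?_) ?_
  · have := rp_ge_one hMpos hM0 hM1 hlc hr0 hr1 hrmono hK (j+1); linarith
  · exact hmono (by omega)
  · exact (Pf_pos hMpos hM0 hM1 hlc hr0 hr1 hrmono hK p).le

lemma ratio_eq (hMpos : ∀ p, 0 < M p) (hM0 : M 0 = 1) (hM1 : M 1 = 1)
    (hlc : ∀ p : ℕ, 1 ≤ p → (M p)^2 ≤ M (p-1) * M (p+1))
    (hr0 : r 0 = 1) (hr1 : r 1 = 1) (hrmono : Monotone r) (hK : 4 ≤ K)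
    (s : ℕ) (hs : 1 ≤ s) :
    (M s / Pf M r K s) / (M (s-1) / Pf M r K (s-1)) = mr M s / rp M r K s := by
  obtain ⟨u, rfl⟩ : ∃ u, s = u + 1 := ⟨s - 1, by omega⟩
  have h1 : u + 1 - 1 = u := rfl
  rw [h1, Pf_succ, mr]
  have e0 : M u ≠ 0 := (hMpos u).ne'
  have e1 : Pf M r K u ≠ 0 := (Pf_pos hMpos hM0 hM1 hlc hr0 hr1 hrmono hK u).ne'
  have e2 : rp M r K (u+1) ≠ 0 := by
    have := rp_ge_one hMpos hM0 hM1 hlc hr0 hr1 hrmono hK (u+1); intro h; rw [h] at this; linarith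
  rw [h1]
  field_simp

end

/-- Reduction lemma: dividing a weight sequence satisfying (M.2) and (M.2)* by a suitable
product of a sequence of 𝔖 yields again such a weight sequence (Lemma 6.5). -/
theorem stmt6 (M : ℕ → ℝ) (hM : IsWeightSeq M) (hM2 : M2 M) (h2s : M2star M)
    (r : ℕ → ℝ) (hr : inFrakR r) :
    ∃ r' : ℕ → ℝ, inFrakR r' ∧ (∀ j, r' j ≤ r j) ∧
      IsWeightSeq (fun p => M p / ∏ j ∈ Finset.range (p+1), r' j) ∧
      M2 (fun p => M p / ∏ j ∈ Finset.range (p+1), r' j) ∧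
      M2star (fun p => M p / ∏ j ∈ Finset.range (p+1), r' j) := by
  obtain ⟨hMpos, hM0, hM1, hMtend, hlc⟩ := hM
  obtain ⟨hrpos, hrmono, hr0, hr1, hrtend⟩ := hr
  obtain ⟨C₀, H, hC₀, hH, hm2⟩ := hM2
  obtain ⟨p₀, N, hp₀, hN, h2⟩ := h2s
  set N₂ := max N 2 with hN₂def
  have hN₂ : 2 ≤ N₂ := le_max_right _ _
  set K := N₂ * N₂ with hKdef
  have hK : 4 ≤ K := by
    calc 4 = 2 * 2 := rfl
    _ ≤ N₂ * N₂ := Nat.mul_le_mul hN₂ hN₂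
  have hmono := rp_mono hMpos hM0 hM1 hlc hr0 hr1 hrmono hK (r := r) (K := K)
  have hone := rp_ge_one hMpos hM0 hM1 hlc hr0 hr1 hrmono hK (r := r) (K := K)
  have hPpos := Pf_pos hMpos hM0 hM1 hlc hr0 hr1 hrmono hK (r := r) (K := K)
  refine ⟨rp M r K, ⟨fun j => lt_of_lt_of_le one_pos (hone j), hmono, rp_zero, rp_one,
      tendsto_atTop_atTop_of_monotone' hmono
        (rp_unbounded hMpos hM0 hM1 hlc hMtend hr0 hr1 hrmono hrtend hK)⟩,
    fun j => rp_le_r hr0 hr1 j, ⟨?_, ?_, ?_, ?_, ?_⟩, ?_, ?_⟩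
  · exact fun p => div_pos (hMpos p) (hPpos p)
  · show M 0 / Pf M r K 0 = 1
    simp [Pf, rp_zero, hM0]
  · show M 1 / Pf M r K 1 = 1
    simp [Pf, Finset.prod_range_succ, rp_zero, rp_one, hM1]
  · -- tendsto
    have hminor : Tendsto (fun p : ℕ => Real.sqrt ((M p) ^ ((p:ℝ)⁻¹))) atTop atTop :=
      sqrt_tendsto_atTop.comp hMtend
    apply tendsto_atTop_mono _ hminor
    intro p
    have hle : Real.sqrt (M p) ≤ M p / Pf M r K p := by
      have h1 := Pf_le_sqrt hMpos hM0 hM1 hlc hr0 hr1 hrmono hK (r := r) (K := K) p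
      calc Real.sqrt (M p) = M p / Real.sqrt (M p) := Real.div_sqrt.symm
      _ ≤ M p / Pf M r K p := div_le_div_of_nonneg_left (hMpos p).le (hPpos p) h1
    show Real.sqrt ((M p) ^ ((p:ℝ)⁻¹)) ≤ (M p / Pf M r K p) ^ ((p:ℝ)⁻¹)
    have e : Real.sqrt ((M p) ^ ((p:ℝ)⁻¹)) = (Real.sqrt (M p)) ^ ((p:ℝ)⁻¹) := by
      rw [Real.sqrt_eq_rpow, Real.sqrt_eq_rpow, ← Real.rpow_mul (hMpos p).le,
        ← Real.rpow_mul (hMpos p).le, mul_comm]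
    rw [e]
    exact Real.rpow_le_rpow (Real.sqrt_nonneg _) hle (by positivity)
  · -- log-convexity
    intro p hp
    obtain ⟨q, rfl⟩ : ∃ q, p = q + 1 := ⟨p - 1, by omega⟩
    show (M (q+1) / Pf M r K (q+1))^2 ≤
      (M (q+1-1) / Pf M r K (q+1-1)) * (M (q+1+1) / Pf M r K (q+1+1))
    have h1 : q + 1 - 1 = q := rfl
    rw [h1]
    have hb2 : (0:ℝ) < (M (q+1))^2 := pow_pos (hMpos _) 2
    have hkey : rp M r K (q+2) * (M (q+1))^2 ≤ rp M r K (q+1) * (M q * M (q+2)) := by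
      have h := rp_ratio (M := M) (r := r) (K := K) q
      rw [mr, mr] at h
      simp only [show q+2-1 = q+1 from rfl, show q+1-1 = q from rfl] at h
      have e0 : M q ≠ 0 := (hMpos q).ne'
      have e1 : M (q+1) ≠ 0 := (hMpos (q+1)).ne'
      have e2 : M (q+2) ≠ 0 := (hMpos (q+2)).ne'
      have h2 : M (q+2) / M (q+1) / (M (q+1) / M q) = M q * M (q+2) / (M (q+1))^2 := by
        field_simp
      rw [h2, mul_div_assoc'] at h
      exact (le_div_iff₀ hb2).mp h
    have hP1 : (0:ℝ) < (Pf M r K (q+1))^2 := pow_pos (hPpos (q+1)) 2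
    have hP2 : (0:ℝ) < Pf M r K q * Pf M r K (q+2) := mul_pos (hPpos q) (hPpos (q+2))
    rw [div_pow, div_mul_div_comm, div_le_div_iff₀ hP1 hP2]
    rw [show q+1+1 = q+2 from rfl, Pf_succ (q+1), Pf_succ q]
    have hnn : (0:ℝ) ≤ Pf M r K q * Pf M r K q * rp M r K (q+1) := by
      have := hone (q+1); nlinarith [hPpos q]
    nlinarith [mul_le_mul_of_nonneg_right hkey hnn]
  · -- M2
    refine ⟨C₀, H, hC₀, hH, fun p q => ?_⟩
    show M (p+q) / Pf M r K (p+q) ≤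
      C₀ * H^(p+q) * (M p / Pf M r K p) * (M q / Pf M r K q)
    have hsub := Pf_submul hMpos hM0 hM1 hlc hr0 hr1 hrmono hK (r := r) (K := K) p q
    have hpq : (0:ℝ) < Pf M r K p * Pf M r K q := mul_pos (hPpos p) (hPpos q)
    calc M (p+q) / Pf M r K (p+q) ≤ M (p+q) / (Pf M r K p * Pf M r K q) :=
          div_le_div_of_nonneg_left (hMpos _).le hpq hsub
    _ ≤ (C₀ * H^(p+q) * M p * M q) / (Pf M r K p * Pf M r K q) := by
          rw [div_le_div_iff₀ hpq hpq]
          exact mul_le_mul_of_nonneg_right (hm2 p q) hpq.le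
    _ = C₀ * H^(p+q) * (M p / Pf M r K p) * (M q / Pf M r K q) := by
          field_simp
  · -- M2star
    refine ⟨p₀, K, hp₀, by omega, fun p hp => ?_⟩
    have hp1 : 1 ≤ p := le_trans hp₀ hp
    have hKp1 : 1 ≤ K * p := by
      have : K * 1 ≤ K * p := Nat.mul_le_mul_left K hp1
      omega
    show 2 * ((M p / Pf M r K p) / (M (p-1) / Pf M r K (p-1))) ≤
      (M (K*p) / Pf M r K (K*p)) / (M (K*p-1) / Pf M r K (K*p-1))
    rw [ratio_eq hMpos hM0 hM1 hlc hr0 hr1 hrmono hK p hp1,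
      ratio_eq hMpos hM0 hM1 hlc hr0 hr1 hrmono hK (K*p) hKp1]
    -- key facts
    have step1 : ∀ s, p₀ ≤ s → 2 * mr M s ≤ mr M (N₂ * s) := by
      intro s hs
      have ha := h2 s hs
      have hb : mr M (N * s) ≤ mr M (N₂ * s) :=
        mr_mono hMpos hM0 hM1 hlc (Nat.mul_le_mul_right s (le_max_left N 2))
      calc 2 * mr M s = 2 * (M s / M (s-1)) := rfl
      _ ≤ M (N*s) / M (N*s-1) := ha
      _ = mr M (N*s) := rfl
      _ ≤ mr M (N₂*s) := hb
    have hA : 4 * mr M p ≤ mr M (K * p) := by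
      have s1 := step1 p hp
      have s2 := step1 (N₂ * p) (le_trans hp (Nat.le_mul_of_pos_left p (by omega)))
      have e : N₂ * (N₂ * p) = K * p := by rw [hKdef]; ring
      rw [e] at s2
      linarith
    have hB : rp M r K (K * p) ≤ 2 * rp M r K p := by
      have h4 : K ≤ K * p := Nat.le_mul_of_pos_right K (by omega)
      have := rp_cap (M := M) (r := r) hK (K*p) (by omega)
      rwa [Nat.mul_div_cancel_left p (by omega : 0 < K)] at this
    have hx : (0:ℝ) < mr M p := mr_pos hMpos p
    have hy : (0:ℝ) < rp M r K p := lt_of_lt_of_le one_pos (hone p)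
    have hY : (0:ℝ) < rp M r K (K*p) := lt_of_lt_of_le one_pos (hone (K*p))
    rw [mul_div_assoc', div_le_div_iff₀ hy hY]
    nlinarith [mul_le_mul_of_nonneg_left hB (by linarith : (0:ℝ) ≤ 2 * mr M p),
      mul_le_mul_of_nonneg_right hA hy.le]
end
end
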